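/- arXiv:math/9611201 — 3 statements merged into one kernel-verified Lean document; each statement's English description precedes it below -/
import Mathlib

section
/- For each natural number n \ge 1 there is a constant R > 0 such that for every natural number k and every polynomial p(t) = \sum_{|\alpha| \le k} c_\alpha t^\alpha on \mathbb{R}^n of total degree at most k with complex coefficients, one has \max_\alpha |c_\alpha| \le R^k \cdot \sup\{|p(t)| : t \in \mathbb{R}^n, |t_1| \le 1, \dots, |t_n| \le 1\}. -/
open Finset Polynomial

noncomputable section MvCoeffBound

/-- `(m+1)^m ≤ e * m^m`. -/
private lemma succ_pow_le_exp_mul (m : ℕ) :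
    ((m : ℝ) + 1) ^ m ≤ Real.exp 1 * (m : ℝ) ^ m := by
  rcases Nat.eq_zero_or_pos m with rfl | hm
  · simpa using Real.one_le_exp zero_le_one
  · have hm' : (0:ℝ) < m := by exact_mod_cast hm
    have h1 : (m:ℝ) + 1 = (m:ℝ) * (1 + 1/m) := by field_simp
    have h2 : (1 + 1/(m:ℝ)) ≤ Real.exp (1/m) := by
      have := Real.add_one_le_exp (1/(m:ℝ)); linarith
    calc ((m:ℝ)+1)^m = (m:ℝ)^m * (1+1/m)^m := by rw [h1, mul_pow]
      _ ≤ (m:ℝ)^m * Real.exp (1/m) ^ m := by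
          gcongr
      _ = (m:ℝ)^m * Real.exp 1 := by
          rw [← Real.exp_nat_mul]
          congr 1
          field_simp
      _ = _ := mul_comm _ _

/-- `(k+1)^k ≤ k! * (2e)^k`. -/
private lemma succ_pow_le_factorial_mul (k : ℕ) :
    ((k:ℝ) + 1) ^ k ≤ (k.factorial : ℝ) * (2 * Real.exp 1) ^ k := by
  induction k with
  | zero => simp
  | succ k ih =>
    have hB := succ_pow_le_exp_mul (k+1)
    push_cast at hB
    have hexp := Real.exp_pos 1
    have hk : (0:ℝ) ≤ (k:ℝ) + 1 := by positivity
    push_cast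
    calc ((k:ℝ)+1+1)^(k+1) ≤ Real.exp 1 * ((k:ℝ)+1)^(k+1) := hB
      _ = Real.exp 1 * (((k:ℝ)+1) * ((k:ℝ)+1)^k) := by ring
      _ ≤ Real.exp 1 * (((k:ℝ)+1) * ((k.factorial:ℝ) * (2*Real.exp 1)^k)) := by
          gcongr
      _ = (((k:ℝ)+1) * (k.factorial:ℝ) * (2*Real.exp 1)^k) * Real.exp 1 := by ring
      _ ≤ (((k:ℝ)+1) * (k.factorial:ℝ) * (2*Real.exp 1)^k) * (2 * Real.exp 1) := by
          gcongr
          linarith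
      _ = ((k+1).factorial : ℝ) * (2*Real.exp 1)^(k+1) := by
          rw [Nat.factorial_succ]
          push_cast
          ring

/-- The interpolation nodes: `j / (k+1)` viewed in `ℂ`. -/
private def nodeC (k j : ℕ) : ℂ := (((j : ℝ) / ((k : ℝ) + 1) : ℝ) : ℂ)

private lemma nodeC_injOn (k : ℕ) : Set.InjOn (nodeC k) (Finset.range (k+1)) := by
  intro a _ b _ hab
  simp only [nodeC, Complex.ofReal_inj] at hab
  have hk : ((k:ℝ)+1) ≠ 0 := by positivity
  field_simp at hab
  exact_mod_cast hab

private lemma norm_nodeC_le (k j : ℕ) (hj : j ≤ k) : ‖nodeC k j‖ ≤ 1 := by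
  rw [nodeC, Complex.norm_real, Real.norm_eq_abs, abs_div]
  rw [div_le_one (by positivity)]
  rw [abs_of_nonneg (by positivity : (0:ℝ) ≤ (j:ℝ)), abs_of_nonneg (by positivity)]
  have : (j:ℝ) ≤ k := by exact_mod_cast hj
  linarith

private lemma coeff_X_sub_C_mul (c : ℂ) (P : ℂ[X]) (m : ℕ) :
    ((X - C c) * P).coeff (m+1) = P.coeff m - c * P.coeff (m+1) := by
  rw [sub_mul, Polynomial.coeff_sub, Polynomial.coeff_X_mul, Polynomial.coeff_C_mul]

private lemma coeff_X_sub_C_mul_zero (c : ℂ) (P : ℂ[X]) :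
    ((X - C c) * P).coeff 0 = - (c * P.coeff 0) := by
  rw [sub_mul, Polynomial.coeff_sub, Polynomial.coeff_C_mul]
  simp [Polynomial.mul_coeff_zero]

/-- Coefficients of a product of monic linear factors with roots of norm at most 1. -/
private lemma coeff_prod_X_sub_C_le (s : Finset ℕ) (a : ℕ → ℂ) (ha : ∀ i ∈ s, ‖a i‖ ≤ 1) :
    ∀ m, ‖(∏ i ∈ s, (X - C (a i))).coeff m‖ ≤ 2 ^ s.card := by
  classical
  induction s using Finset.induction_on with
  | empty =>
    intro m
    simp only [Finset.prod_empty, Polynomial.coeff_one, Finset.card_empty, pow_zero]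
    split <;> simp
  | @insert j s hj ih =>
    have ha' : ∀ i ∈ s, ‖a i‖ ≤ 1 := fun i hi => ha i (Finset.mem_insert_of_mem hi)
    have haj : ‖a j‖ ≤ 1 := ha j (Finset.mem_insert_self j s)
    have ihm := ih ha'
    intro m
    rw [Finset.prod_insert hj, Finset.card_insert_of_notMem hj]
    have hP : (0:ℝ) ≤ 2 ^ s.card := by positivity
    rcases m with _ | m
    · rw [coeff_X_sub_C_mul_zero, norm_neg, norm_mul, pow_succ]
      nlinarith [mul_le_mul haj (ihm 0) (norm_nonneg _) zero_le_one]
    · rw [coeff_X_sub_C_mul]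
      refine (norm_sub_le _ _).trans ?_
      rw [norm_mul, pow_succ]
      nlinarith [mul_le_mul haj (ihm (m+1)) (norm_nonneg _) zero_le_one, ihm m]

/-- the splitting of the punctured range. -/
private lemma erase_range_split (k j : ℕ) (hj : j ≤ k) :
    (Finset.range (k+1)).erase j = Finset.range j ∪ Finset.Ico (j+1) (k+1) := by
  ext i
  simp only [Finset.mem_erase, Finset.mem_range, Finset.mem_union, Finset.mem_Ico]
  omega

private lemma prod_abs_sub_eq (k j : ℕ) (hj : j ≤ k) :
    ∏ i ∈ (Finset.range (k+1)).erase j, |(j:ℝ) - (i:ℝ)| =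
      (j.factorial : ℝ) * ((k-j).factorial : ℝ) := by
  rw [erase_range_split k j hj, Finset.prod_union]
  · have h1 : ∏ i ∈ Finset.range j, |(j:ℝ) - (i:ℝ)| = (j.factorial : ℝ) := by
      have : ∀ i ∈ Finset.range j, |(j:ℝ) - (i:ℝ)| = ((j - i : ℕ) : ℝ) := by
        intro i hi
        rw [Finset.mem_range] at hi
        rw [Nat.cast_sub hi.le, abs_of_nonneg]
        have : (i:ℝ) ≤ j := by exact_mod_cast hi.le
        linarith
      rw [Finset.prod_congr rfl this, ← Nat.cast_prod,
        ← Nat.descFactorial_eq_prod_range, Nat.descFactorial_self]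
    have h2 : ∏ i ∈ Finset.Ico (j+1) (k+1), |(j:ℝ) - (i:ℝ)| = ((k-j).factorial : ℝ) := by
      have : ∀ i ∈ Finset.Ico (j+1) (k+1), |(j:ℝ) - (i:ℝ)| = ((i - j : ℕ) : ℝ) := by
        intro i hi
        rw [Finset.mem_Ico] at hi
        have hij : j ≤ i := by omega
        rw [Nat.cast_sub hij, abs_sub_comm, abs_of_nonneg]
        have : (j:ℝ) ≤ i := by exact_mod_cast hij
        linarith
      rw [Finset.prod_congr rfl this, ← Nat.cast_prod, Finset.prod_Ico_eq_prod_range]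
      have : ∀ i ∈ Finset.range (k + 1 - (j+1)), (j + 1 + i - j) = i + 1 := by
        intro i _; omega
      rw [Finset.prod_congr rfl this, Finset.prod_range_add_one_eq_factorial]
      congr 2
      omega
    rw [h1, h2]
  · rw [Finset.disjoint_left]
    intro i hi hi'
    rw [Finset.mem_range] at hi
    rw [Finset.mem_Ico] at hi'
    omega

private lemma factorial_le_two_pow_mul (k j : ℕ) (hj : j ≤ k) :
    (k.factorial : ℝ) ≤ 2 ^ k * ((j.factorial : ℝ) * ((k-j).factorial : ℝ)) := by
  have h1 : k.choose j * j.factorial * (k-j).factorial = k.factorial :=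
    Nat.choose_mul_factorial_mul_factorial hj
  have h2 : k.choose j ≤ 2 ^ k := by
    calc k.choose j ≤ ∑ m ∈ Finset.range (k+1), k.choose m :=
          Finset.single_le_sum (fun m _ => Nat.zero_le _) (Finset.mem_range.mpr (by omega))
      _ = 2 ^ k := Nat.sum_range_choose k
  have : k.factorial ≤ 2 ^ k * (j.factorial * (k-j).factorial) := by
    calc k.factorial = k.choose j * (j.factorial * (k-j).factorial) := by rw [← h1]; ring
      _ ≤ 2 ^ k * (j.factorial * (k-j).factorial) := by
          exact Nat.mul_le_mul_right _ h2
  exact_mod_cast this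

/-- Main single-variable bound on the coefficients of the Lagrange basis polynomials. -/
private lemma basis_coeff_bound (k j : ℕ) (hj : j ≤ k) (m : ℕ) :
    ‖(Lagrange.basis (Finset.range (k+1)) (nodeC k) j).coeff m‖ ≤ (8 * Real.exp 1) ^ k := by
  have hjmem : j ∈ Finset.range (k+1) := Finset.mem_range.mpr (by omega)
  have hcard : ((Finset.range (k+1)).erase j).card = k := by
    rw [Finset.card_erase_of_mem hjmem, Finset.card_range]
    omega
  -- rewrite the basis polynomial
  have hbasis : Lagrange.basis (Finset.range (k+1)) (nodeC k) j =
      C (∏ i ∈ (Finset.range (k+1)).erase j, (nodeC k j - nodeC k i)⁻¹) *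
        ∏ i ∈ (Finset.range (k+1)).erase j, (X - C (nodeC k i)) := by
    rw [Lagrange.basis]
    simp only [Lagrange.basisDivisor]
    rw [Finset.prod_mul_distrib, map_prod]
  rw [hbasis, Polynomial.coeff_C_mul, norm_mul]
  -- bound the normalizing constant
  have hden : ‖∏ i ∈ (Finset.range (k+1)).erase j, (nodeC k j - nodeC k i)⁻¹‖ ≤
      (4 * Real.exp 1) ^ k := by
    rw [norm_prod]
    have hnorm : ∀ i ∈ (Finset.range (k+1)).erase j,
        ‖(nodeC k j - nodeC k i)⁻¹‖ = ((k:ℝ) + 1) / |(j:ℝ) - (i:ℝ)| := by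
      intro i _
      rw [norm_inv]
      have : nodeC k j - nodeC k i = ((((j:ℝ) - (i:ℝ)) / ((k:ℝ)+1) : ℝ) : ℂ) := by
        rw [nodeC, nodeC]
        push_cast
        ring
      rw [this, Complex.norm_real, Real.norm_eq_abs, abs_div,
        abs_of_pos (by positivity : (0:ℝ) < (k:ℝ)+1)]
      exact inv_div _ _
    rw [Finset.prod_congr rfl hnorm, Finset.prod_div_distrib, Finset.prod_const, hcard,
      prod_abs_sub_eq k j hj]
    have hF : (0:ℝ) < (j.factorial : ℝ) * ((k-j).factorial : ℝ) := by positivity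
    rw [div_le_iff₀ hF]
    calc ((k:ℝ)+1)^k ≤ (k.factorial : ℝ) * (2 * Real.exp 1) ^ k :=
          succ_pow_le_factorial_mul k
      _ ≤ (2 ^ k * ((j.factorial : ℝ) * ((k-j).factorial : ℝ))) * (2 * Real.exp 1) ^ k := by
          have := factorial_le_two_pow_mul k j hj
          have hp : (0:ℝ) ≤ (2 * Real.exp 1) ^ k := by positivity
          nlinarith
      _ = (4 * Real.exp 1) ^ k * ((j.factorial : ℝ) * ((k-j).factorial : ℝ)) := by
          have h4 : (2:ℝ)^k * (2*Real.exp 1)^k = (4*Real.exp 1)^k := by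
            rw [← mul_pow]; congr 1; ring
          rw [← h4]; ring
  -- bound the numerator coefficients
  have hnum : ‖(∏ i ∈ (Finset.range (k+1)).erase j, (X - C (nodeC k i))).coeff m‖ ≤ 2 ^ k := by
    have := coeff_prod_X_sub_C_le ((Finset.range (k+1)).erase j) (nodeC k)
      (fun i hi => norm_nodeC_le k i (by
        have := Finset.mem_range.mp (Finset.mem_of_mem_erase hi); omega)) m
    rwa [hcard] at this
  calc ‖∏ i ∈ (Finset.range (k+1)).erase j, (nodeC k j - nodeC k i)⁻¹‖ *
        ‖(∏ i ∈ (Finset.range (k+1)).erase j, (X - C (nodeC k i))).coeff m‖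
      ≤ (4 * Real.exp 1) ^ k * 2 ^ k := by
        apply mul_le_mul hden hnum (norm_nonneg _) (by positivity)
    _ = (8 * Real.exp 1) ^ k := by rw [← mul_pow]; congr 1; ring

/-- The key duality: summing Lagrange-basis coefficients against powers of the nodes
recovers the delta function. -/
private lemma sum_basis_coeff_mul_pow (k b m : ℕ) (hb : b ≤ k) :
    ∑ j ∈ Finset.range (k+1),
        (Lagrange.basis (Finset.range (k+1)) (nodeC k) j).coeff m * nodeC k j ^ b
      = if m = b then 1 else 0 := by
  have hdeg : ((X : ℂ[X]) ^ b).degree < (Finset.range (k+1)).card := by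
    rw [Finset.card_range, Polynomial.degree_X_pow]
    exact_mod_cast Nat.lt_succ_of_le hb
  have h := Lagrange.eq_interpolate (v := nodeC k) (nodeC_injOn k) hdeg
  have h2 := congrArg (fun q : ℂ[X] => q.coeff m) h
  simp only [Lagrange.interpolate_apply, Polynomial.finset_sum_coeff,
    Polynomial.coeff_C_mul, Polynomial.eval_pow, Polynomial.eval_X,
    Polynomial.coeff_X_pow] at h2
  calc ∑ j ∈ Finset.range (k+1),
        (Lagrange.basis (Finset.range (k+1)) (nodeC k) j).coeff m * nodeC k j ^ b
      = ∑ j ∈ Finset.range (k+1),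
        nodeC k j ^ b * (Lagrange.basis (Finset.range (k+1)) (nodeC k) j).coeff m :=
        Finset.sum_congr rfl fun j _ => mul_comm _ _
    _ = if m = b then 1 else 0 := h2.symm

/-- Multivariate interpolation formula for the coefficients. -/
private lemma mv_coeff_eq (n k : ℕ) (p : MvPolynomial (Fin n) ℂ) (hp : p.totalDegree ≤ k)
    (α : Fin n →₀ ℕ) :
    MvPolynomial.coeff α p =
      ∑ s : Fin n → Fin (k+1),
        (∏ i, (Lagrange.basis (Finset.range (k+1)) (nodeC k) (s i)).coeff (α i)) *
          MvPolynomial.eval (fun i => nodeC k ((s i : ℕ))) p := by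
  classical
  conv_lhs => rw [MvPolynomial.as_sum p]
  conv_rhs => rw [MvPolynomial.as_sum p]
  rw [MvPolynomial.coeff_sum]
  simp_rw [map_sum, Finset.mul_sum]
  rw [Finset.sum_comm]
  refine Finset.sum_congr rfl fun β hβ => ?_
  have hβk : ∀ i, β i ≤ k := by
    intro i
    rcases Nat.eq_zero_or_pos (β i) with h0 | h0
    · omega
    · have hi : i ∈ β.support := Finsupp.mem_support_iff.mpr (by omega)
      have : β i ≤ β.sum fun _ e => e := by
        rw [Finsupp.sum]
        exact Finset.single_le_sum (fun _ _ => Nat.zero_le _) hi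
      exact this.trans ((MvPolynomial.le_totalDegree hβ).trans hp)
  rw [MvPolynomial.coeff_monomial]
  have heval : ∀ s : Fin n → Fin (k+1),
      MvPolynomial.eval (fun i => nodeC k ((s i : ℕ))) (MvPolynomial.monomial β (p.coeff β)) =
        p.coeff β * ∏ i, nodeC k ((s i : ℕ)) ^ β i := by
    intro s
    rw [MvPolynomial.eval_monomial]
    congr 1
    exact Finsupp.prod_fintype _ _ fun i => pow_zero _
  simp_rw [heval]
  have hrw : ∀ s : Fin n → Fin (k+1),
      (∏ i, (Lagrange.basis (Finset.range (k+1)) (nodeC k) ((s i : ℕ))).coeff (α i)) *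
        (p.coeff β * ∏ i, nodeC k ((s i : ℕ)) ^ β i) =
      p.coeff β * ∏ i, ((Lagrange.basis (Finset.range (k+1)) (nodeC k) ((s i : ℕ))).coeff (α i) *
        nodeC k ((s i : ℕ)) ^ β i) := by
    intro s
    rw [Finset.prod_mul_distrib]
    ring
  simp_rw [hrw]
  rw [← Finset.mul_sum]
  rw [← Fintype.prod_sum
    (f := fun (i : Fin n) (j : Fin (k+1)) =>
      (Lagrange.basis (Finset.range (k+1)) (nodeC k) ((j : ℕ))).coeff (α i) *
        nodeC k ((j : ℕ)) ^ β i)]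
  have hinner : ∀ i : Fin n,
      (∑ j : Fin (k+1),
        (Lagrange.basis (Finset.range (k+1)) (nodeC k) ((j : ℕ))).coeff (α i) *
          nodeC k ((j : ℕ)) ^ β i) = if α i = β i then 1 else 0 := by
    intro i
    rw [Fin.sum_univ_eq_sum_range (fun j =>
      (Lagrange.basis (Finset.range (k+1)) (nodeC k) j).coeff (α i) * nodeC k j ^ β i)]
    exact sum_basis_coeff_mul_pow k (β i) (α i) (hβk i)
  simp_rw [hinner]
  by_cases hab : β = α
  · subst hab
    simp
  · rw [if_neg hab]
    have : ∃ i, α i ≠ β i := by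
      by_contra h
      push_neg at h
      exact hab (Finsupp.ext fun i => (h i).symm)
    obtain ⟨i, hi⟩ := this
    rw [Finset.prod_eq_zero (Finset.mem_univ i) (by rw [if_neg hi]), mul_zero]

/-- Lemma 2.3 of Eastwood–Graham: a real-variable analogue of Cauchy estimates
for polynomials on `ℝ^n`.  For each `n ≥ 1` there is a constant `R > 0` such
that for every polynomial `p(t) = ∑_{|α| ≤ k} c_α t^α` on `ℝ^n` of total degree
at most `k` with complex coefficients, every coefficient satisfies
`|c_α| ≤ R ^ k * sup { |p(t)| : |t₁| ≤ 1, …, |tₙ| ≤ 1 }`. -/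
theorem mv_coeff_bound_of_sup_on_cube (n : ℕ) (hn : 1 ≤ n) :
    ∃ R : ℝ, 0 < R ∧
      ∀ (k : ℕ) (p : MvPolynomial (Fin n) ℂ), p.totalDegree ≤ k →
        ∀ α : Fin n →₀ ℕ, ‖MvPolynomial.coeff α p‖ ≤
          R ^ k * ⨆ t : {t : Fin n → ℝ // ∀ i, |t i| ≤ 1},
            ‖MvPolynomial.eval (fun i => ((t : Fin n → ℝ) i : ℂ)) p‖ := by
  classical
  refine ⟨(16 * Real.exp 1) ^ n, by positivity, ?_⟩
  intro k p hp α
  haveI : Nonempty {t : Fin n → ℝ // ∀ i, |t i| ≤ 1} := ⟨⟨fun _ => 0, fun i => by simp⟩⟩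
  set f : {t : Fin n → ℝ // ∀ i, |t i| ≤ 1} → ℝ :=
    fun t => ‖MvPolynomial.eval (fun i => ((t : Fin n → ℝ) i : ℂ)) p‖ with hf
  -- compactness and boundedness
  have hK : IsCompact {t : Fin n → ℝ | ∀ i, |t i| ≤ 1} := by
    have hset : {t : Fin n → ℝ | ∀ i, |t i| ≤ 1} =
        Set.pi Set.univ (fun _ : Fin n => Set.Icc (-1:ℝ) 1) := by
      ext t
      simp [Set.mem_pi, abs_le, forall_and, Pi.le_def]
    rw [hset]
    exact isCompact_univ_pi fun _ => isCompact_Icc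
  haveI : CompactSpace {t : Fin n → ℝ // ∀ i, |t i| ≤ 1} :=
    isCompact_iff_compactSpace.mp hK
  have hcont : Continuous f := by
    apply Continuous.norm
    exact (MvPolynomial.continuous_eval (p := p)).comp
      (continuous_pi fun i => Complex.continuous_ofReal.comp
        ((continuous_apply i).comp continuous_subtype_val))
  have hbdd : BddAbove (Set.range f) := (isCompact_range hcont).bddAbove
  set M := ⨆ t, f t with hM
  have hle : ∀ t, f t ≤ M := fun t => le_ciSup hbdd t
  have hM0 : 0 ≤ M := le_trans (norm_nonneg _) (hle ⟨fun _ => 0, fun i => by simp⟩)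
  -- the nodes are in the cube
  have hnode : ∀ s : Fin n → Fin (k+1),
      ‖MvPolynomial.eval (fun i => nodeC k ((s i : ℕ))) p‖ ≤ M := by
    intro s
    have hmem : ∀ i, |((s i : ℕ) : ℝ) / ((k:ℝ) + 1)| ≤ 1 := by
      intro i
      rw [abs_div, abs_of_nonneg (by positivity : (0:ℝ) ≤ ((s i : ℕ) : ℝ)),
        abs_of_pos (by positivity : (0:ℝ) < (k:ℝ)+1), div_le_one (by positivity)]
      have : ((s i : ℕ) : ℝ) ≤ k := by exact_mod_cast Nat.lt_succ_iff.mp (s i).isLt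
      linarith
    exact hle ⟨fun i => ((s i : ℕ) : ℝ) / ((k:ℝ) + 1), hmem⟩
  -- main estimate
  rw [mv_coeff_eq n k p hp α]
  calc ‖∑ s : Fin n → Fin (k+1),
        (∏ i, (Lagrange.basis (Finset.range (k+1)) (nodeC k) ((s i : ℕ))).coeff (α i)) *
          MvPolynomial.eval (fun i => nodeC k ((s i : ℕ))) p‖
      ≤ ∑ s : Fin n → Fin (k+1),
        ‖(∏ i, (Lagrange.basis (Finset.range (k+1)) (nodeC k) ((s i : ℕ))).coeff (α i)) *
          MvPolynomial.eval (fun i => nodeC k ((s i : ℕ))) p‖ := norm_sum_le _ _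
    _ ≤ ∑ _s : Fin n → Fin (k+1), ((8 * Real.exp 1) ^ k) ^ n * M := by
        apply Finset.sum_le_sum
        intro s _
        rw [norm_mul]
        apply mul_le_mul _ (hnode s) (norm_nonneg _) (by positivity)
        rw [norm_prod]
        calc ∏ i, ‖(Lagrange.basis (Finset.range (k+1)) (nodeC k) ((s i : ℕ))).coeff (α i)‖
            ≤ ∏ _i : Fin n, (8 * Real.exp 1) ^ k := by
              apply Finset.prod_le_prod (fun _ _ => norm_nonneg _)
              intro i _
              exact basis_coeff_bound k (s i : ℕ) (Nat.lt_succ_iff.mp (s i).isLt) (α i)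
          _ = ((8 * Real.exp 1) ^ k) ^ n := by
              rw [Finset.prod_const, Finset.card_univ, Fintype.card_fin]
    _ = ((k:ℝ)+1) ^ n * (((8 * Real.exp 1) ^ k) ^ n * M) := by
        rw [Finset.sum_const, Finset.card_univ, Fintype.card_fun, Fintype.card_fin,
          Fintype.card_fin, nsmul_eq_mul]
        push_cast
        ring
    _ ≤ ((16 * Real.exp 1) ^ n) ^ k * M := by
        have h2k : ((k:ℝ) + 1) ≤ 2 ^ k := by
          exact_mod_cast Nat.succ_le_of_lt (Nat.lt_two_pow_self (n := k))
        have : ((k:ℝ)+1) ^ n * ((8 * Real.exp 1) ^ k) ^ n ≤ ((16 * Real.exp 1) ^ n) ^ k := by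
          rw [← mul_pow]
          have hb : ((k:ℝ)+1) * (8 * Real.exp 1) ^ k ≤ (16 * Real.exp 1) ^ k := by
            calc ((k:ℝ)+1) * (8 * Real.exp 1) ^ k ≤ 2 ^ k * (8 * Real.exp 1) ^ k := by
                  gcongr
              _ = (16 * Real.exp 1) ^ k := by rw [← mul_pow]; congr 1; ring
          calc (((k:ℝ)+1) * (8 * Real.exp 1) ^ k) ^ n ≤ ((16 * Real.exp 1) ^ k) ^ n := by
                apply pow_le_pow_left₀ (by positivity) hb
            _ = ((16 * Real.exp 1) ^ n) ^ k := by rw [← pow_mul, ← pow_mul, Nat.mul_comm]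
        calc ((k:ℝ)+1) ^ n * (((8 * Real.exp 1) ^ k) ^ n * M)
            = (((k:ℝ)+1) ^ n * ((8 * Real.exp 1) ^ k) ^ n) * M := by ring
          _ ≤ ((16 * Real.exp 1) ^ n) ^ k * M := by
              apply mul_le_mul_of_nonneg_right this hM0

end MvCoeffBound
end

section
/- For each natural number n \ge 1 and each \varepsilon > 0 there is a constant R > 0 (depending on n and \varepsilon) such that for every natural number k and every polynomial p(t) = \sum_{|\alpha| \le k} c_\alpha t^\alpha on \mathbb{R}^n of total degree at most k with complex coefficients, one has \max_\alpha |c_\alpha| \le R^k \cdot \sup\{|p(t)| : t \in \mathbb{R}^n, |t_1| \le \varepsilon, \dots, |t_n| \le \varepsilon\}. -/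
open Polynomial in
lemma coeff_prod_X_sub_C_bound (s : Finset ℕ) (a : ℕ → ℂ) :
    ∀ m : ℕ, ‖(∏ j ∈ s, (X - C (a j))).coeff m‖ ≤ ∏ j ∈ s, (1 + ‖a j‖) := by
  classical
  induction s using Finset.induction with
  | empty =>
    intro m
    simp only [Finset.prod_empty, Polynomial.coeff_one]
    split <;> simp
  | @insert i s hi ih =>
    intro m
    rw [Finset.prod_insert hi, Finset.prod_insert hi]
    have hq : 0 ≤ ∏ j ∈ s, (1 + ‖a j‖) :=
      Finset.prod_nonneg fun j _ => by positivity
    have expand : (X - C (a i)) * ∏ j ∈ s, (X - C (a j)) =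
        X * ∏ j ∈ s, (X - C (a j)) - C (a i) * ∏ j ∈ s, (X - C (a j)) := by ring
    rw [expand]
    cases m with
    | zero =>
      rw [Polynomial.coeff_sub, Polynomial.mul_coeff_zero, Polynomial.coeff_X_zero,
        Polynomial.coeff_C_mul, zero_mul, zero_sub, norm_neg, norm_mul]
      calc ‖a i‖ * ‖(∏ j ∈ s, (X - C (a j))).coeff 0‖
          ≤ ‖a i‖ * ∏ j ∈ s, (1 + ‖a j‖) := by
            exact mul_le_mul_of_nonneg_left (ih 0) (norm_nonneg _)
        _ ≤ (1 + ‖a i‖) * ∏ j ∈ s, (1 + ‖a j‖) := by nlinarith [norm_nonneg (a i)]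
    | succ m =>
      rw [Polynomial.coeff_sub, Polynomial.coeff_X_mul, Polynomial.coeff_C_mul]
      have h1 : ‖(∏ j ∈ s, (X - C (a j))).coeff m - a i * (∏ j ∈ s, (X - C (a j))).coeff (m+1)‖
          ≤ ‖(∏ j ∈ s, (X - C (a j))).coeff m‖ +
            ‖a i‖ * ‖(∏ j ∈ s, (X - C (a j))).coeff (m+1)‖ := by
        rw [← norm_mul]; exact norm_sub_le _ _
      have h2 := mul_le_mul_of_nonneg_left (ih (m+1)) (norm_nonneg (a i))
      have h3 := ih m
      nlinarith [norm_nonneg (a i)]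

lemma prod_erase_abs_sub (k i : ℕ) (hi : i ≤ k) :
    ∏ j ∈ (Finset.range (k+1)).erase i, |(i:ℝ) - (j:ℝ)| = (i.factorial : ℝ) * ((k-i).factorial : ℝ) := by
  have hsplit : (Finset.range (k+1)).erase i = Finset.range i ∪ Finset.Ico (i+1) (k+1) := by
    ext j
    simp only [Finset.mem_erase, Finset.mem_range, Finset.mem_union, Finset.mem_Ico]
    omega
  have hdisj : Disjoint (Finset.range i) (Finset.Ico (i+1) (k+1)) := by
    rw [Finset.disjoint_left]
    intro j hj hj'
    simp only [Finset.mem_range] at hj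
    simp only [Finset.mem_Ico] at hj'
    omega
  rw [hsplit, Finset.prod_union hdisj]
  have h1 : ∏ j ∈ Finset.range i, |(i:ℝ) - (j:ℝ)| = (i.factorial : ℝ) := by
    have : ∀ j ∈ Finset.range i, |(i:ℝ) - (j:ℝ)| = ((i - j : ℕ) : ℝ) := by
      intro j hj
      rw [Finset.mem_range] at hj
      rw [Nat.cast_sub hj.le, abs_of_nonneg]
      have : (j:ℝ) ≤ i := Nat.cast_le.2 hj.le
      linarith
    rw [Finset.prod_congr rfl this, ← Nat.cast_prod]
    congr 1
    have := Finset.prod_range_reflect (fun j => j + 1) i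
    rw [← Finset.prod_range_add_one_eq_factorial, ← this]
    apply Finset.prod_congr rfl
    intro j hj
    rw [Finset.mem_range] at hj
    omega
  have h2 : ∏ j ∈ Finset.Ico (i+1) (k+1), |(i:ℝ) - (j:ℝ)| = ((k-i).factorial : ℝ) := by
    have : ∀ j ∈ Finset.Ico (i+1) (k+1), |(i:ℝ) - (j:ℝ)| = ((j - i : ℕ) : ℝ) := by
      intro j hj
      rw [Finset.mem_Ico] at hj
      rw [abs_sub_comm, Nat.cast_sub (by omega), abs_of_nonneg]
      have : (i:ℝ) ≤ j := Nat.cast_le.2 (by omega)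
      linarith
    rw [Finset.prod_congr rfl this, ← Nat.cast_prod]
    congr 1
    rw [Finset.prod_Ico_eq_prod_range, ← Finset.prod_range_add_one_eq_factorial]
    have hki : k + 1 - (i + 1) = k - i := by omega
    rw [hki]
    apply Finset.prod_congr rfl
    intro j hj
    omega
  rw [h1, h2]


set_option maxHeartbeats 1000000 in
open Polynomial in
lemma oneD_coeff_bound (ε : ℝ) (hε : 0 < ε) :
    ∃ R : ℝ, 1 ≤ R ∧ ∀ (k : ℕ) (p : ℂ[X]), p.natDegree ≤ k → ∀ (m : ℕ) (S : ℝ),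
      (∀ x : ℝ, |x| ≤ ε → ‖p.eval (x:ℂ)‖ ≤ S) → ‖p.coeff m‖ ≤ R ^ k * S := by
  set E := Real.exp 1 with hE
  have hE1 : 1 ≤ E := Real.one_le_exp zero_le_one
  refine ⟨2 * E^2 * (1 + ε) / ε, ?_, ?_⟩
  · have hE2 : 1 ≤ E^2 := by nlinarith
    rw [le_div_iff₀ hε]; nlinarith
  intro k p hdeg m S hsup
  have h00 := hsup 0 (by simp [hε.le])
  rw [show ((0:ℝ):ℂ) = 0 from by norm_num] at h00
  have hS : 0 ≤ S := le_trans (norm_nonneg _) h00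
  rcases Nat.eq_zero_or_pos k with rfl | hk
  · rw [pow_zero, one_mul]
    cases m with
    | zero =>
      rw [Polynomial.coeff_zero_eq_eval_zero]
      exact h00
    | succ m =>
      rw [Polynomial.coeff_eq_zero_of_natDegree_lt (by omega)]
      simpa using hS
  · set v : ℕ → ℂ := fun j => ((ε * j / (k+1) : ℝ) : ℂ) with hv
    have hk1 : (0:ℝ) < (k:ℝ) + 1 := by positivity
    have hinj : Set.InjOn v ((Finset.range (k+1)) : Set ℕ) := by
      intro a _ b _ hab
      have h4 : ε * (a:ℝ) / ((k:ℝ)+1) = ε * b / ((k:ℝ)+1) := by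
        have := hab
        simp only [hv, Complex.ofReal_inj] at this
        exact_mod_cast this
      have h5 : (a:ℝ) = (b:ℝ) := by
        rw [div_left_inj' (by positivity), mul_right_inj' hε.ne'] at h4
        exact h4
      exact_mod_cast h5
    have hdlt : p.degree < ((Finset.range (k+1)).card : ℕ) := by
      rw [Finset.card_range]
      exact lt_of_le_of_lt Polynomial.degree_le_natDegree
        (by exact_mod_cast Nat.lt_succ_of_le hdeg)
    have hrep := Lagrange.eq_interpolate hinj hdlt
    have hcoeff : p.coeff m = ∑ i ∈ Finset.range (k+1),
        p.eval (v i) * (Lagrange.basis (Finset.range (k+1)) v i).coeff m := by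
      conv_lhs => rw [hrep]
      rw [Lagrange.interpolate_apply, Polynomial.finset_sum_coeff]
      exact Finset.sum_congr rfl fun i _ => Polynomial.coeff_C_mul _
    have hval : ∀ i ∈ Finset.range (k+1), ‖p.eval (v i)‖ ≤ S := by
      intro i hi
      rw [Finset.mem_range] at hi
      have hik : (i:ℝ) ≤ k := by exact_mod_cast Nat.lt_succ_iff.mp hi
      refine hsup (ε * i / (k+1)) ?_
      rw [abs_of_nonneg (by positivity), div_le_iff₀ hk1]
      nlinarith [hε.le]
    have hbasisb : ∀ i ∈ Finset.range (k+1),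
        ‖(Lagrange.basis (Finset.range (k+1)) v i).coeff m‖ ≤
          (1+ε)^k * (((k:ℝ)+1)/ε)^k * (1 / ((i.factorial:ℝ) * ((k-i).factorial:ℝ))) := by
      intro i hi
      have hik : i ≤ k := by rw [Finset.mem_range] at hi; omega
      have hD : (0:ℝ) < (i.factorial:ℝ) * ((k-i).factorial:ℝ) := by
        have := Nat.factorial_pos i
        have := Nat.factorial_pos (k-i)
        positivity
      have hcard : ((Finset.range (k+1)).erase i).card = k := by
        rw [Finset.card_erase_of_mem hi, Finset.card_range]
        omega
      have hbasis_eq : Lagrange.basis (Finset.range (k+1)) v i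
          = C (∏ j ∈ (Finset.range (k+1)).erase i, (v i - v j)⁻¹) *
            ∏ j ∈ (Finset.range (k+1)).erase i, (X - C (v j)) := by
        rw [Lagrange.basis]
        simp_rw [Lagrange.basisDivisor]
        rw [Finset.prod_mul_distrib, map_prod]
      rw [hbasis_eq, Polynomial.coeff_C_mul, norm_mul]
      have hnorm_prod : ‖∏ j ∈ (Finset.range (k+1)).erase i, (v i - v j)⁻¹‖
          = ((ε/((k:ℝ)+1))^k * ((i.factorial:ℝ) * ((k-i).factorial:ℝ)))⁻¹ := by
        rw [norm_prod]
        have hterm : ∀ j ∈ (Finset.range (k+1)).erase i,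
            ‖(v i - v j)⁻¹‖ = (ε/((k:ℝ)+1) * |(i:ℝ) - (j:ℝ)|)⁻¹ := by
          intro j _
          rw [norm_inv]
          congr 1
          have hvv : v i - v j = (((ε * i / (k+1) - ε * j / (k+1)) : ℝ) : ℂ) := by
            simp [hv]
          rw [hvv, Complex.norm_real, Real.norm_eq_abs,
            show ε * (i:ℝ) / ((k:ℝ)+1) - ε * j / ((k:ℝ)+1) = ε/((k:ℝ)+1) * ((i:ℝ) - j) by ring,
            abs_mul, abs_of_pos (by positivity)]
        rw [Finset.prod_congr rfl hterm, Finset.prod_inv_distrib]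
        congr 1
        rw [Finset.prod_mul_distrib, Finset.prod_const, hcard, prod_erase_abs_sub k i hik]
      rw [hnorm_prod]
      have hnodal : ‖(∏ j ∈ (Finset.range (k+1)).erase i, (X - C (v j))).coeff m‖ ≤ (1+ε)^k := by
        refine le_trans (coeff_prod_X_sub_C_bound _ v m) ?_
        calc ∏ j ∈ (Finset.range (k+1)).erase i, (1 + ‖v j‖)
            ≤ ∏ _j ∈ (Finset.range (k+1)).erase i, (1+ε) := by
              refine Finset.prod_le_prod (fun j _ => by positivity) (fun j hj => ?_)
              have hjk : (j:ℝ) ≤ k := by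
                have := Finset.mem_of_mem_erase hj
                rw [Finset.mem_range] at this
                exact_mod_cast Nat.lt_succ_iff.mp this
              have : ‖v j‖ = ε * j / ((k:ℝ)+1) := by
                simp only [hv, Complex.norm_real, Real.norm_eq_abs]
                exact abs_of_nonneg (by positivity)
              rw [this]
              have : ε * (j:ℝ) / ((k:ℝ)+1) ≤ ε := by
                rw [div_le_iff₀ hk1]; nlinarith [hε.le]
              linarith
          _ = (1+ε)^k := by rw [Finset.prod_const, hcard]
      calc ((ε/((k:ℝ)+1))^k * ((i.factorial:ℝ) * ((k-i).factorial:ℝ)))⁻¹ *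
            ‖(∏ j ∈ (Finset.range (k+1)).erase i, (X - C (v j))).coeff m‖
          ≤ ((ε/((k:ℝ)+1))^k * ((i.factorial:ℝ) * ((k-i).factorial:ℝ)))⁻¹ * (1+ε)^k := by
            refine mul_le_mul_of_nonneg_left hnodal (by positivity)
        _ = (1+ε)^k * (((k:ℝ)+1)/ε)^k * (1 / ((i.factorial:ℝ) * ((k-i).factorial:ℝ))) := by
            rw [mul_inv, ← inv_pow, inv_div]
            ring
    have hsum : ∑ i ∈ Finset.range (k+1),
        (1:ℝ) / ((i.factorial:ℝ) * ((k-i).factorial:ℝ)) = 2^k / (k.factorial:ℝ) := by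
      have hterm : ∀ i ∈ Finset.range (k+1),
          (1:ℝ) / ((i.factorial:ℝ) * ((k-i).factorial:ℝ)) = (k.choose i : ℝ) / (k.factorial:ℝ) := by
        intro i hi
        have hik : i ≤ k := by rw [Finset.mem_range] at hi; omega
        have hch := Nat.choose_mul_factorial_mul_factorial hik
        have h1 : (0:ℝ) < (i.factorial:ℝ) := by exact_mod_cast Nat.factorial_pos i
        have h2 : (0:ℝ) < ((k-i).factorial:ℝ) := by exact_mod_cast Nat.factorial_pos (k-i)
        have h3 : (0:ℝ) < (k.factorial:ℝ) := by exact_mod_cast Nat.factorial_pos k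
        rw [div_eq_div_iff (by positivity) h3.ne', one_mul]
        rw [← mul_assoc]
        exact_mod_cast hch.symm
      rw [Finset.sum_congr rfl hterm, ← Finset.sum_div, ← Nat.cast_sum, Nat.sum_range_choose]
      push_cast
      ring
    calc ‖p.coeff m‖
        ≤ ∑ i ∈ Finset.range (k+1), ‖p.eval (v i)‖ *
            ‖(Lagrange.basis (Finset.range (k+1)) v i).coeff m‖ := by
          rw [hcoeff]
          refine le_trans (norm_sum_le _ _) (Finset.sum_le_sum fun i _ => ?_)
          rw [norm_mul]
      _ ≤ ∑ i ∈ Finset.range (k+1), (S * ((1+ε)^k * (((k:ℝ)+1)/ε)^k)) *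
            (1 / ((i.factorial:ℝ) * ((k-i).factorial:ℝ))) := by
          refine Finset.sum_le_sum fun i hi => ?_
          rw [mul_assoc]
          exact mul_le_mul (hval i hi) (hbasisb i hi) (norm_nonneg _) hS
      _ = S * ((1+ε)^k * (((k:ℝ)+1)/ε)^k) * (2^k / (k.factorial:ℝ)) := by
          rw [← Finset.mul_sum, hsum]
      _ ≤ (2 * E^2 * (1 + ε) / ε)^k * S := by
          have key : ((k:ℝ)+1)^k / (k.factorial:ℝ) ≤ E^(2*k) := by
            have h1 := Real.pow_div_factorial_le_exp (x := ((k:ℝ)+1)) (by positivity) k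
            have h2 : Real.exp ((k:ℝ)+1) = E^(k+1) := by
              rw [hE, Real.exp_one_pow]
              push_cast
              ring_nf
            have h3 : E^(k+1) ≤ E^(2*k) := by
              apply pow_le_pow_right₀ hE1
              omega
            calc ((k:ℝ)+1)^k / (k.factorial:ℝ) ≤ Real.exp ((k:ℝ)+1) := h1
              _ = E^(k+1) := h2
              _ ≤ E^(2*k) := h3
          have hc : (0:ℝ) ≤ S * (1+ε)^k * 2^k / ε^k := by positivity
          have expand : (2 * E^2 * (1 + ε) / ε)^k = 2^k * E^(2*k) * (1+ε)^k / ε^k := by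
            rw [div_pow, mul_pow, mul_pow, ← pow_mul]
          calc S * ((1+ε)^k * (((k:ℝ)+1)/ε)^k) * (2^k / (k.factorial:ℝ))
              = (S * (1+ε)^k * 2^k / ε^k) * (((k:ℝ)+1)^k / (k.factorial:ℝ)) := by
                rw [div_pow]; ring
            _ ≤ (S * (1+ε)^k * 2^k / ε^k) * E^(2*k) := mul_le_mul_of_nonneg_left key hc
            _ = (2 * E^2 * (1 + ε) / ε)^k * S := by rw [expand]; ring


set_option maxHeartbeats 800000 in
lemma mv_coeff_bound_aux (ε : ℝ) (hε : 0 < ε) : ∀ n : ℕ, ∃ R : ℝ, 1 ≤ R ∧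
    ∀ (k : ℕ) (p : MvPolynomial (Fin n) ℂ), p.totalDegree ≤ k →
      ∀ (α : Fin n →₀ ℕ) (S : ℝ), 0 ≤ S →
        (∀ t : Fin n → ℝ, (∀ i, |t i| ≤ ε) →
          ‖MvPolynomial.eval (fun i => ((t i : ℝ) : ℂ)) p‖ ≤ S) →
        ‖MvPolynomial.coeff α p‖ ≤ R ^ k * S := by
  intro n
  induction n with
  | zero =>
    refine ⟨1, le_refl _, ?_⟩
    intro k p _ α S _ hsup
    have hα : α = 0 := by
      ext a
      exact absurd a.2 (by simp)
    have hp := MvPolynomial.eq_C_of_isEmpty p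
    have h0 := hsup (fun _ => 0) (fun i => i.elim0)
    rw [one_pow, one_mul, hα]
    calc ‖MvPolynomial.coeff 0 p‖
        = ‖MvPolynomial.eval (fun i : Fin 0 => ((0:ℝ):ℂ)) p‖ := by
          nth_rewrite 2 [hp]
          rw [MvPolynomial.eval_C]
      _ ≤ S := h0
  | succ n ih =>
    obtain ⟨Rn, hRn1, hRn⟩ := ih
    obtain ⟨R1, hR11, hR1⟩ := oneD_coeff_bound ε hε
    refine ⟨Rn * R1, by nlinarith, ?_⟩
    intro k p hdeg α S hS hsup
    set q := MvPolynomial.finSuccEquiv ℂ n p with hq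
    have key : ∀ (i : ℕ) (s : Fin n → ℝ), (∀ j, |s j| ≤ ε) →
        ‖MvPolynomial.eval (fun j => ((s j : ℝ) : ℂ)) (q.coeff i)‖ ≤ R1 ^ k * S := by
      intro i s hs
      set ps : Polynomial ℂ := q.map (MvPolynomial.eval fun j => ((s j : ℝ) : ℂ)) with hps
      have hps_deg : ps.natDegree ≤ k := by
        refine le_trans Polynomial.natDegree_map_le ?_
        rw [hq, MvPolynomial.natDegree_finSuccEquiv]
        exact le_trans (MvPolynomial.degreeOf_le_totalDegree p 0) hdeg
      have hb := hR1 k ps hps_deg i S ?_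
      · rwa [hps, Polynomial.coeff_map] at hb
      · intro x hx
        have hev : ps.eval (x:ℂ) =
            MvPolynomial.eval (Fin.cons (x:ℂ) fun j => ((s j : ℝ) : ℂ)) p :=
          (MvPolynomial.eval_eq_eval_mv_eval' _ _ _).symm
        rw [hev]
        have hcube : ∀ i : Fin (n+1), |(Fin.cons x s : Fin (n+1) → ℝ) i| ≤ ε := by
          intro i
          refine Fin.cases ?_ ?_ i
          · simpa using hx
          · intro j; simpa using hs j
        have := hsup (Fin.cons x s) hcube
        have harg : (fun i => (((Fin.cons x s : Fin (n+1) → ℝ) i : ℝ) : ℂ))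
            = Fin.cons (x:ℂ) fun j => ((s j : ℝ) : ℂ) := by
          funext i
          refine Fin.cases ?_ ?_ i <;> simp
        rwa [harg] at this
    have hq_deg : (q.coeff (α 0)).totalDegree ≤ k := by
      by_cases h0 : q.coeff (α 0) = 0
      · simp [h0]
      · exact le_trans (le_trans (Nat.le_add_right _ _)
          (MvPolynomial.totalDegree_coeff_finSuccEquiv_add_le p (α 0) h0)) hdeg
    have h2 := hRn k (q.coeff (α 0)) hq_deg (Finsupp.tail α) (R1 ^ k * S)
      (mul_nonneg (pow_nonneg (by linarith) k) hS) (key (α 0))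
    have hc : MvPolynomial.coeff α p = MvPolynomial.coeff (Finsupp.tail α) (q.coeff (α 0)) := by
      rw [hq, MvPolynomial.finSuccEquiv_coeff_coeff, Finsupp.cons_tail]
    rw [hc]
    calc ‖MvPolynomial.coeff (Finsupp.tail α) (q.coeff (α 0))‖
        ≤ Rn ^ k * (R1 ^ k * S) := h2
      _ = (Rn * R1) ^ k * S := by rw [mul_pow]; ring

/-- The rescaled version of Lemma 2.3 of Eastwood–Graham: for each `n ≥ 1` and
each `ε > 0` there is a constant `R > 0` (depending on `n` and `ε`) such that
for every polynomial `p(t) = ∑_{|α| ≤ k} c_α t^α` on `ℝ^n` of total degree at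
most `k` with complex coefficients, every coefficient satisfies
`|c_α| ≤ R ^ k * sup { |p(t)| : |t₁| ≤ ε, …, |tₙ| ≤ ε }`. -/
theorem mv_coeff_bound_of_sup_on_small_cube (n : ℕ) (hn : 1 ≤ n) (ε : ℝ) (hε : 0 < ε) :
    ∃ R : ℝ, 0 < R ∧
      ∀ (k : ℕ) (p : MvPolynomial (Fin n) ℂ), p.totalDegree ≤ k →
        ∀ α : Fin n →₀ ℕ, ‖MvPolynomial.coeff α p‖ ≤
          R ^ k * ⨆ t : {t : Fin n → ℝ // ∀ i, |t i| ≤ ε},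
            ‖MvPolynomial.eval (fun i => ((t : Fin n → ℝ) i : ℂ)) p‖ := by
  obtain ⟨R, hR1, hR⟩ := mv_coeff_bound_aux ε hε n
  refine ⟨R, by linarith, ?_⟩
  intro k p hdeg α
  have hcont : Continuous fun t : Fin n → ℝ =>
      ‖MvPolynomial.eval (fun i => ((t i : ℝ) : ℂ)) p‖ := by
    apply Continuous.norm
    exact (MvPolynomial.continuous_eval p).comp
      (continuous_pi fun i => Complex.continuous_ofReal.comp (continuous_apply i))
  have hK : IsCompact {t : Fin n → ℝ | ∀ i, |t i| ≤ ε} := by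
    have hset : {t : Fin n → ℝ | ∀ i, |t i| ≤ ε}
        = Set.pi Set.univ (fun _ : Fin n => Set.Icc (-ε) ε) := by
      ext t
      simp only [Set.mem_setOf_eq, Set.mem_univ_pi, Set.mem_Icc, abs_le]
    rw [hset]
    exact isCompact_univ_pi fun _ => isCompact_Icc
  have hbdd : BddAbove (Set.range fun t : {t : Fin n → ℝ // ∀ i, |t i| ≤ ε} =>
      ‖MvPolynomial.eval (fun i => (((t : Fin n → ℝ) i : ℝ) : ℂ)) p‖) := by
    have h1 := (hK.image hcont).bddAbove
    rwa [Set.image_eq_range] at h1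
  have hS0 : 0 ≤ ⨆ t : {t : Fin n → ℝ // ∀ i, |t i| ≤ ε},
      ‖MvPolynomial.eval (fun i => (((t : Fin n → ℝ) i : ℝ) : ℂ)) p‖ :=
    Real.iSup_nonneg fun t => norm_nonneg _
  refine hR k p hdeg α _ hS0 ?_
  intro t ht
  exact le_ciSup hbdd ⟨t, ht⟩
end

section
/- Let a_k : B \to \mathbb{C} (k \in \mathbb{N}) be C^1 functions on an open ball B centered at the origin of \mathbb{R}^m \times \mathbb{R}^m, satisfying for every j = 1, \dots, m: \partial a_0 / \partial t_j = 0 on B, and \partial a_k / \partial t_j = \partial a_{k-1} / \partial s_j on B for every k \ge 1. Then there exist an open ball B' centered at the origin of \mathbb{R}^m and C^\infty functions b_k : B' \to \mathbb{C} (k \in \mathbb{N}) such that a_k(s,t) = \sum_{|\alpha| \le k} \frac{1}{\alpha!} t^\alpha \partial_s^\alpha b_{k - |\alpha|}(s) for all k and all (s,t) \in B with s \in B' and t \in B'. In particular each a_k is a polynomial in t of degree at most k. -/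
noncomputable def partialDerivS (m : ℕ) (j : Fin m) (g : (Fin m → ℝ) → ℂ) :
    (Fin m → ℝ) → ℂ :=
  fun s => fderiv ℝ g s (Pi.single j 1)

noncomputable def multiDeriv (m : ℕ) (α : Fin m → ℕ) (g : (Fin m → ℝ) → ℂ) :
    (Fin m → ℝ) → ℂ :=
  (List.finRange m).foldr (fun j h => (partialDerivS m j)^[α j] h) g

def multiIdxLe (m k : ℕ) : Finset (Fin m → ℕ) :=
  (Fintype.piFinset fun _ : Fin m => Finset.range (k + 1)).filter
    fun α => (∑ j, α j) ≤ k

open Metric Finset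

namespace EG

variable {m : ℕ}

/-- complex monomial `t ^ α` -/
noncomputable def monoC (α : Fin m → ℕ) (t : Fin m → ℝ) : ℂ :=
  ∏ j, ((t j : ℝ) : ℂ) ^ α j

lemma mem_multiIdxLe {k : ℕ} {α : Fin m → ℕ} :
    α ∈ multiIdxLe m k ↔ (∑ j, α j) ≤ k := by
  constructor
  · intro h; exact (Finset.mem_filter.mp h).2
  · intro h
    refine Finset.mem_filter.mpr ⟨Fintype.mem_piFinset.mpr fun j => ?_, h⟩
    exact Finset.mem_range.mpr (Nat.lt_succ_of_le (le_trans (Finset.single_le_sum (f := fun j => α j) (fun _ _ => Nat.zero_le _) (Finset.mem_univ j)) h))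

lemma apply_le_of_mem_multiIdxLe {k : ℕ} {α : Fin m → ℕ} (h : α ∈ multiIdxLe m k) (j : Fin m) :
    α j ≤ k :=
  le_trans (Finset.single_le_sum (f := fun j => α j) (fun _ _ => Nat.zero_le _) (Finset.mem_univ j)) (mem_multiIdxLe.mp h)

/-- Interpolation data: nodes in the ball and dual coefficients for monomials of
coordinatewise degree `≤ k`. -/
structure Interp (m k : ℕ) (ρ : ℝ) where
  node : (Fin m → Fin (k+1)) → (Fin m → ℝ)
  lam : (Fin m → ℕ) → (Fin m → Fin (k+1)) → ℂ
  node_mem : ∀ v, node v ∈ ball (0 : Fin m → ℝ) ρ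
  dual : ∀ α β : Fin m → ℕ, (∀ j, α j ≤ k) → (∀ j, β j ≤ k) →
    ∑ v, lam α v * monoC β (node v) = if α = β then 1 else 0

lemma vandermonde_dual (k : ℕ) {ρ : ℝ} (hρ : 0 < ρ) :
    ∃ x : Fin (k+1) → ℝ, (∀ v, |x v| < ρ) ∧ ∃ w : Fin (k+1) → Fin (k+1) → ℂ,
      ∀ a b : Fin (k+1), ∑ v, w a v * ((x v : ℝ) : ℂ) ^ (b : ℕ) = if a = b then 1 else 0 := by
  set x : Fin (k+1) → ℝ := fun v => (ρ / 2) * ((v : ℕ) + 1) / (k + 1) with hx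
  have hxpos : ∀ v, 0 < x v := by
    intro v
    apply div_pos (by positivity) (by positivity)
  have hxlt : ∀ v, |x v| < ρ := by
    intro v
    rw [abs_of_pos (hxpos v)]
    have h1 : ((v : ℕ) : ℝ) + 1 ≤ (k : ℝ) + 1 := by
      have := v.isLt; push_cast; norm_num
      exact_mod_cast Nat.lt_succ_iff.mp this
    calc (ρ/2) * ((v:ℕ) + 1) / (k+1) ≤ (ρ/2) * ((k:ℝ)+1) / (k+1) := by
          apply div_le_div_of_nonneg_right ?_ (by positivity)
          exact mul_le_mul_of_nonneg_left h1 (by positivity)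
      _ = ρ/2 := by field_simp
      _ < ρ := by linarith
  have hxinj : Function.Injective x := by
    intro v v' h
    have : ((v:ℕ) : ℝ) = ((v':ℕ) : ℝ) := by
      have h' : (ρ/2) * (((v:ℕ):ℝ) + 1) / (k+1) = (ρ/2) * (((v':ℕ):ℝ) + 1) / (k+1) := h
      have hk : (0:ℝ) < k+1 := by positivity
      rw [div_left_inj' hk.ne', mul_right_inj' (by positivity)] at h'
      linarith
    exact Fin.ext (by exact_mod_cast this)
  refine ⟨x, hxlt, ?_⟩
  set M : Matrix (Fin (k+1)) (Fin (k+1)) ℂ := Matrix.vandermonde (fun v => ((x v : ℝ) : ℂ)) with hM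
  have hdet : M.det ≠ 0 := by
    rw [hM, Matrix.det_vandermonde]
    apply Finset.prod_ne_zero_iff.mpr
    intro i _
    apply Finset.prod_ne_zero_iff.mpr
    intro j hj
    have : x j ≠ x i := fun h => (Finset.mem_Ioi.mp hj).ne' (hxinj h)
    simpa [sub_eq_zero] using fun h => this (by exact_mod_cast h)
  refine ⟨fun a v => M⁻¹ a v, fun a b => ?_⟩
  have := Matrix.nonsing_inv_mul M (by rwa [isUnit_iff_ne_zero])
  have happ := congrFun (congrFun this a) b
  rw [Matrix.mul_apply] at happ
  simpa [Matrix.one_apply, hM, Matrix.vandermonde] using happ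

lemma interp_exists (k : ℕ) {ρ : ℝ} (hρ : 0 < ρ) : Nonempty (Interp m k ρ) := by
  obtain ⟨x, hxlt, w, hw⟩ := vandermonde_dual k hρ
  set w' : ℕ → Fin (k+1) → ℂ := fun n v => if h : n < k + 1 then w ⟨n, h⟩ v else 0 with hw'
  refine ⟨⟨fun v j => x (v j), fun α v => ∏ j, w' (α j) (v j), ?_, ?_⟩⟩
  · intro v
    rw [mem_ball_zero_iff]
    rw [pi_norm_lt_iff hρ]
    intro j
    simpa [Real.norm_eq_abs] using hxlt (v j)
  · intro α β hα hβ
    have key : ∀ j : Fin m, ∑ u : Fin (k+1), w' (α j) u * ((x u : ℝ) : ℂ) ^ (β j) =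
        if α j = β j then 1 else 0 := by
      intro j
      have hj : α j < k + 1 := Nat.lt_succ_of_le (hα j)
      have hbj : β j < k + 1 := Nat.lt_succ_of_le (hβ j)
      have := hw ⟨α j, hj⟩ ⟨β j, hbj⟩
      simp only [hw', dif_pos hj]
      convert this using 2
      simp [Fin.ext_iff]
    calc ∑ v : Fin m → Fin (k+1), (∏ j, w' (α j) (v j)) * monoC β (fun j => x (v j))
        = ∑ v : Fin m → Fin (k+1), ∏ j, (w' (α j) (v j) * ((x (v j) : ℝ) : ℂ) ^ (β j)) := by
          apply Finset.sum_congr rfl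
          intro v _
          rw [monoC, ← Finset.prod_mul_distrib]
      _ = ∏ j, ∑ u : Fin (k+1), w' (α j) u * ((x u : ℝ) : ℂ) ^ (β j) := by
          rw [Finset.prod_univ_sum]
          rw [← Fintype.piFinset_univ]
      _ = ∏ j, if α j = β j then 1 else 0 := by
          exact Finset.prod_congr rfl fun j _ => key j
      _ = if α = β then 1 else 0 := by
          by_cases h : α = β
          · simp [h]
          · rw [if_neg h]
            obtain ⟨j, hj⟩ : ∃ j, α j ≠ β j := by
              by_contra hc
              push_neg at hc
              exact h (funext hc)
            exact Finset.prod_eq_zero (Finset.mem_univ j) (if_neg hj)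



section Main

variable {ρ : ℝ} {a : ℕ → (Fin m → ℝ) × (Fin m → ℝ) → ℂ}

lemma mem_prodBall {s t : Fin m → ℝ} :
    (s, t) ∈ ball (0 : (Fin m → ℝ) × (Fin m → ℝ)) ρ ↔
      s ∈ ball (0 : Fin m → ℝ) ρ ∧ t ∈ ball (0 : Fin m → ℝ) ρ := by
  rw [← ball_prod_same]
  exact Set.mem_prod

lemma diffAt (ha : ∀ k, ContDiffOn ℝ 1 (a k) (ball 0 ρ)) (k : ℕ) {s t : Fin m → ℝ}
    (hs : s ∈ ball (0 : Fin m → ℝ) ρ) (ht : t ∈ ball (0 : Fin m → ℝ) ρ) :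
    DifferentiableAt ℝ (a k) (s, t) :=
  ((ha k).differentiableOn one_ne_zero).differentiableAt
    (isOpen_ball.mem_nhds (mem_prodBall.mpr ⟨hs, ht⟩))

/-- the embedding `s ↦ (s, t₀)` as a continuous linear map derivative -/
noncomputable def inlE (m : ℕ) : (Fin m → ℝ) →L[ℝ] (Fin m → ℝ) × (Fin m → ℝ) :=
  (ContinuousLinearMap.id ℝ (Fin m → ℝ)).prod 0

@[simp] lemma inlE_apply (v : Fin m → ℝ) : inlE m v = (v, 0) := rfl

lemma hasFDerivAt_slice (ha : ∀ k, ContDiffOn ℝ 1 (a k) (ball 0 ρ)) (k : ℕ)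
    {s t0 : Fin m → ℝ} (hs : s ∈ ball (0 : Fin m → ℝ) ρ) (ht0 : t0 ∈ ball (0 : Fin m → ℝ) ρ) :
    HasFDerivAt (fun s' => a k (s', t0)) ((fderiv ℝ (a k) (s, t0)).comp (inlE m)) s := by
  have h1 : HasFDerivAt (fun s' : Fin m → ℝ => (s', t0)) (inlE m) s :=
    (hasFDerivAt_id s).prodMk (hasFDerivAt_const t0 s)
  exact ((diffAt ha k hs ht0).hasFDerivAt).comp s h1

variable (a) in
/-- the coefficient functions, defined by interpolation from `a k` -/
noncomputable def coeffC (I : ∀ k, Interp m k ρ) (k : ℕ) (α : Fin m → ℕ)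
    (s : Fin m → ℝ) : ℂ :=
  ∑ v, (I k).lam α v * a k (s, (I k).node v)

variable (a) in
/-- the partial `s`-derivatives of the coefficient functions -/
noncomputable def pderivC (I : ∀ k, Interp m k ρ) (k : ℕ) (α : Fin m → ℕ) (j : Fin m)
    (s : Fin m → ℝ) : ℂ :=
  ∑ v, (I k).lam α v * fderiv ℝ (a k) (s, (I k).node v) (Pi.single j 1, 0)

lemma coeffC_hasFDerivAt (ha : ∀ k, ContDiffOn ℝ 1 (a k) (ball 0 ρ)) (I : ∀ k, Interp m k ρ)
    (k : ℕ) (α : Fin m → ℕ) {s : Fin m → ℝ} (hs : s ∈ ball (0 : Fin m → ℝ) ρ) :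
    HasFDerivAt (coeffC a I k α)
      (∑ v, (I k).lam α v • ((fderiv ℝ (a k) (s, (I k).node v)).comp (inlE m))) s := by
  apply HasFDerivAt.fun_sum
  intro v _
  exact (hasFDerivAt_slice ha k hs ((I k).node_mem v)).const_mul _

lemma coeffC_fderiv_apply (ha : ∀ k, ContDiffOn ℝ 1 (a k) (ball 0 ρ)) (I : ∀ k, Interp m k ρ)
    (k : ℕ) (α : Fin m → ℕ) {s : Fin m → ℝ} (hs : s ∈ ball (0 : Fin m → ℝ) ρ) (j : Fin m) :
    fderiv ℝ (coeffC a I k α) s (Pi.single j 1) = pderivC a I k α j s := by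
  rw [(coeffC_hasFDerivAt ha I k α hs).fderiv]
  simp [pderivC]

/-- extraction of coefficients: if `F` agrees on the ball with a polynomial with
coefficients `u`, then `u` is obtained from `F` by the interpolation functionals. -/
lemma extract {K : ℕ} (I : ∀ k, Interp m k ρ) (F : (Fin m → ℝ) → ℂ) (u : (Fin m → ℕ) → ℂ)
    (h : ∀ t ∈ ball (0 : Fin m → ℝ) ρ, F t = ∑ β ∈ multiIdxLe m K, monoC β t * u β) :
    ∀ α ∈ multiIdxLe m K, u α = ∑ v, (I K).lam α v * F ((I K).node v) := by
  intro α hα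
  symm
  have : ∀ v, F ((I K).node v) = ∑ β ∈ multiIdxLe m K, monoC β ((I K).node v) * u β :=
    fun v => h _ ((I K).node_mem v)
  calc ∑ v, (I K).lam α v * F ((I K).node v)
      = ∑ v, ∑ β ∈ multiIdxLe m K, (I K).lam α v * monoC β ((I K).node v) * u β := by
        apply Finset.sum_congr rfl
        intro v _
        rw [this v, Finset.mul_sum]
        exact Finset.sum_congr rfl fun β _ => by ring
    _ = ∑ β ∈ multiIdxLe m K, (∑ v, (I K).lam α v * monoC β ((I K).node v)) * u β := by
        rw [Finset.sum_comm]
        exact Finset.sum_congr rfl fun β _ => by rw [Finset.sum_mul]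
    _ = ∑ β ∈ multiIdxLe m K, (if α = β then 1 else 0) * u β := by
        apply Finset.sum_congr rfl
        intro β hβ
        rw [(I K).dual α β (apply_le_of_mem_multiIdxLe hα) (apply_le_of_mem_multiIdxLe hβ)]
    _ = u α := by
        simp only [ite_mul, one_mul, zero_mul]
        rw [Finset.sum_ite_eq]
        simp [hα]

/-- uniqueness of coefficients -/
lemma coeff_eq_of_expansion_eq {K : ℕ} (I : ∀ k, Interp m k ρ) (u u' : (Fin m → ℕ) → ℂ)
    (h : ∀ t ∈ ball (0 : Fin m → ℝ) ρ,
      ∑ β ∈ multiIdxLe m K, monoC β t * u β = ∑ β ∈ multiIdxLe m K, monoC β t * u' β) :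
    ∀ α ∈ multiIdxLe m K, u α = u' α := by
  intro α hα
  have h1 := extract I (fun t => ∑ β ∈ multiIdxLe m K, monoC β t * u β) u
    (fun t _ => rfl) α hα
  have h2 := extract I (fun t => ∑ β ∈ multiIdxLe m K, monoC β t * u β) u'
    (fun t ht => h t ht) α hα
  rw [h1, h2]

noncomputable def inrE (m : ℕ) : (Fin m → ℝ) →L[ℝ] (Fin m → ℝ) × (Fin m → ℝ) :=
  ContinuousLinearMap.prod 0 (ContinuousLinearMap.id ℝ (Fin m → ℝ))

@[simp] lemma inrE_apply (v : Fin m → ℝ) : inrE m v = (0, v) := rfl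

lemma hasFDerivAt_sliceT (ha : ∀ k, ContDiffOn ℝ 1 (a k) (ball 0 ρ)) (k : ℕ)
    {s0 t : Fin m → ℝ} (hs0 : s0 ∈ ball (0 : Fin m → ℝ) ρ) (ht : t ∈ ball (0 : Fin m → ℝ) ρ) :
    HasFDerivAt (fun t' => a k (s0, t')) ((fderiv ℝ (a k) (s0, t)).comp (inrE m)) t := by
  have h1 : HasFDerivAt (fun t' : Fin m → ℝ => (s0, t')) (inrE m) t :=
    (hasFDerivAt_const s0 t).prodMk (hasFDerivAt_id t)
  exact ((diffAt ha k hs0 ht).hasFDerivAt).comp t h1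

lemma single_smul_sum (v : Fin m → ℝ) : ∑ j, v j • (Pi.single j 1 : Fin m → ℝ) = v := by
  have : ∀ j, v j • (Pi.single j 1 : Fin m → ℝ) = Pi.single j (v j) := by
    intro j
    rw [← Pi.single_smul, smul_eq_mul, mul_one]
  rw [Finset.sum_congr rfl fun j _ => this j]
  exact Finset.univ_sum_single v

lemma pair_zero_eq_sum (v : Fin m → ℝ) :
    ((0 : Fin m → ℝ), v) = ∑ j, v j • ((0 : Fin m → ℝ), (Pi.single j 1 : Fin m → ℝ)) := by
  apply Prod.ext
  · rw [Prod.fst_sum]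
    simp
  · rw [Prod.snd_sum]
    simp only [Prod.smul_snd]
    exact (single_smul_sum v).symm

lemma a0_const (ha : ∀ k, ContDiffOn ℝ 1 (a k) (ball 0 ρ))
    (h0 : ∀ j : Fin m, ∀ p ∈ ball (0 : (Fin m → ℝ) × (Fin m → ℝ)) ρ,
      fderiv ℝ (a 0) p (0, Pi.single j 1) = 0)
    {s t : Fin m → ℝ} (hs : s ∈ ball (0 : Fin m → ℝ) ρ) (ht : t ∈ ball (0 : Fin m → ℝ) ρ) :
    a 0 (s, t) = a 0 (s, 0) := by
  have hρ : (0 : ℝ) < ρ := pos_of_mem_ball hs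
  set g : (Fin m → ℝ) → ℂ := fun t' => a 0 (s, t') with hg
  have hdiff : ∀ x ∈ ball (0 : Fin m → ℝ) ρ, HasFDerivAt g ((fderiv ℝ (a 0) (s, x)).comp (inrE m)) x :=
    fun x hx => hasFDerivAt_sliceT ha 0 hs hx
  have hzero : ∀ x ∈ ball (0 : Fin m → ℝ) ρ, ((fderiv ℝ (a 0) (s, x)).comp (inrE m)) = 0 := by
    intro x hx
    apply ContinuousLinearMap.ext
    intro v
    have : ((0 : Fin m → ℝ), v) = ∑ j, v j • ((0 : Fin m → ℝ), (Pi.single j 1 : Fin m → ℝ)) := pair_zero_eq_sum v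
    simp only [ContinuousLinearMap.comp_apply, inrE_apply, ContinuousLinearMap.zero_apply]
    rw [this, map_sum]
    apply Finset.sum_eq_zero
    intro j _
    rw [map_smul]
    rw [h0 j (s, x) (mem_prodBall.mpr ⟨hs, hx⟩)]
    simp
  have hdO : DifferentiableOn ℝ g (ball (0 : Fin m → ℝ) ρ) :=
    fun x hx => ((hdiff x hx).differentiableAt).differentiableWithinAt
  have hbd : ∀ x ∈ ball (0 : Fin m → ℝ) ρ, ‖fderivWithin ℝ g (ball (0 : Fin m → ℝ) ρ) x‖ ≤ 0 := by
    intro x hx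
    rw [((hdiff x hx).differentiableAt).fderivWithin (isOpen_ball.uniqueDiffWithinAt hx)]
    rw [(hdiff x hx).fderiv, hzero x hx]
    simp
  have h1 := Convex.norm_image_sub_le_of_norm_fderivWithin_le hdO hbd (convex_ball _ _)
    (mem_ball_self hρ) ht
  have h2 : ‖g t - g 0‖ ≤ 0 := by simpa using h1
  have h3 : g t = g 0 := sub_eq_zero.mp (norm_le_zero_iff.mp h2)
  simpa [hg] using h3

lemma multiIdxLe_zero : multiIdxLe m 0 = {(0 : Fin m → ℕ)} := by
  ext α
  rw [mem_multiIdxLe, Finset.mem_singleton]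
  constructor
  · intro h
    funext j
    exact Nat.le_zero.mp (le_trans (Finset.single_le_sum (f := fun j => α j) (fun _ _ => Nat.zero_le _) (Finset.mem_univ j)) h)
  · rintro rfl
    simp

lemma expansion_zero (ha : ∀ k, ContDiffOn ℝ 1 (a k) (ball 0 ρ))
    (h0 : ∀ j : Fin m, ∀ p ∈ ball (0 : (Fin m → ℝ) × (Fin m → ℝ)) ρ,
      fderiv ℝ (a 0) p (0, Pi.single j 1) = 0) (I : ∀ k, Interp m k ρ)
    {s t : Fin m → ℝ} (hs : s ∈ ball (0 : Fin m → ℝ) ρ) (ht : t ∈ ball (0 : Fin m → ℝ) ρ) :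
    a 0 (s, t) = ∑ α ∈ multiIdxLe m 0, monoC α t * coeffC a I 0 α s := by
  have hρ : (0 : ℝ) < ρ := pos_of_mem_ball hs
  have hlam : ∑ v, (I 0).lam 0 v = 1 := by
    have := (I 0).dual 0 0 (fun j => le_rfl) (fun j => le_rfl)
    simpa [monoC] using this
  rw [multiIdxLe_zero, Finset.sum_singleton]
  have : coeffC a I 0 0 s = a 0 (s, 0) := by
    rw [coeffC]
    calc ∑ v, (I 0).lam 0 v * a 0 (s, (I 0).node v)
        = ∑ v, (I 0).lam 0 v * a 0 (s, 0) := by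
          exact Finset.sum_congr rfl fun v _ => by rw [a0_const ha h0 hs ((I 0).node_mem v)]
      _ = a 0 (s, 0) := by rw [← Finset.sum_mul, hlam, one_mul]
  rw [this, a0_const ha h0 hs ht]
  simp [monoC]

@[simp] lemma monoC_zero (t : Fin m → ℝ) : monoC (0 : Fin m → ℕ) t = 1 := by
  simp [monoC]

lemma sum_single_nat (j : Fin m) (n : ℕ) : ∑ l, (Pi.single j n : Fin m → ℕ) l = n := by
  simp [Pi.single_apply]

lemma sum_add_single (α : Fin m → ℕ) (j : Fin m) :
    ∑ l, (α + (Pi.single j 1 : Fin m → ℕ)) l = (∑ l, α l) + 1 := by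
  simp only [Pi.add_apply]
  rw [Finset.sum_add_distrib, sum_single_nat]

lemma add_sub_single (α : Fin m → ℕ) (j : Fin m) :
    α + (Pi.single j 1 : Fin m → ℕ) - Pi.single j 1 = α := by
  funext l
  simp

lemma sub_add_single {β : Fin m → ℕ} {j : Fin m} (h : 1 ≤ β j) :
    β - (Pi.single j 1 : Fin m → ℕ) + Pi.single j 1 = β := by
  funext l
  rcases eq_or_ne l j with rfl | hne
  · simp [Nat.sub_add_cancel h]
  · simp [Pi.single_apply, hne]

lemma sum_sub_single_add_one {β : Fin m → ℕ} {j : Fin m} (h : 1 ≤ β j) :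
    (∑ l, (β - (Pi.single j 1 : Fin m → ℕ)) l) + 1 = ∑ l, β l := by
  rw [← Finset.add_sum_erase _ β (Finset.mem_univ j),
    ← Finset.add_sum_erase _ (β - (Pi.single j 1 : Fin m → ℕ)) (Finset.mem_univ j)]
  have h1 : (β - (Pi.single j 1 : Fin m → ℕ)) j = β j - 1 := by simp
  have h2 : ∀ l ∈ Finset.univ.erase j, (β - (Pi.single j 1 : Fin m → ℕ)) l = β l := by
    intro l hl
    have hne : l ≠ j := Finset.ne_of_mem_erase hl
    simp [Pi.single_apply, hne]
  have h3 : ∑ l ∈ Finset.univ.erase j, (β - (Pi.single j 1 : Fin m → ℕ)) l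
      = ∑ l ∈ Finset.univ.erase j, β l := Finset.sum_congr rfl h2
  rw [h1, h3]
  omega

lemma monoC_smul (α : Fin m → ℕ) (r : ℝ) (t : Fin m → ℝ) :
    monoC α (r • t) = ((r : ℂ)) ^ (∑ l, α l) * monoC α t := by
  rw [monoC, monoC, ← Finset.prod_pow_eq_pow_sum, ← Finset.prod_mul_distrib]
  apply Finset.prod_congr rfl
  intro l _
  rw [Pi.smul_apply, smul_eq_mul]
  push_cast
  rw [mul_pow]

lemma monoC_add_single (α : Fin m → ℕ) (j : Fin m) (t : Fin m → ℝ) :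
    monoC (α + (Pi.single j 1 : Fin m → ℕ)) t = ((t j : ℝ) : ℂ) * monoC α t := by
  rw [monoC, monoC]
  have : ∀ l : Fin m, ((t l : ℝ) : ℂ) ^ ((α + (Pi.single j 1 : Fin m → ℕ)) l) =
      ((t l : ℝ) : ℂ) ^ ((Pi.single j 1 : Fin m → ℕ) l) * ((t l : ℝ) : ℂ) ^ (α l) := by
    intro l
    rw [Pi.add_apply, pow_add, mul_comm]
  rw [Finset.prod_congr rfl fun l _ => this l, Finset.prod_mul_distrib]
  congr 1
  calc ∏ l, ((t l : ℝ) : ℂ) ^ ((Pi.single j 1 : Fin m → ℕ) l)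
      = ∏ l, if l = j then ((t l : ℝ) : ℂ) else 1 := by
        apply Finset.prod_congr rfl
        intro l _
        rcases eq_or_ne l j with rfl | hne
        · simp
        · simp [Pi.single_apply, hne]
    _ = ((t j : ℝ) : ℂ) := by simp

lemma pderiv_expansion (ha : ∀ k, ContDiffOn ℝ 1 (a k) (ball 0 ρ)) (I : ∀ k, Interp m k ρ)
    (k : ℕ)
    (hexp : ∀ s ∈ ball (0 : Fin m → ℝ) ρ, ∀ t ∈ ball (0 : Fin m → ℝ) ρ,
      a k (s, t) = ∑ α ∈ multiIdxLe m k, monoC α t * coeffC a I k α s)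
    {s t : Fin m → ℝ} (hs : s ∈ ball (0 : Fin m → ℝ) ρ) (ht : t ∈ ball (0 : Fin m → ℝ) ρ)
    (j : Fin m) :
    fderiv ℝ (a k) (s, t) (Pi.single j 1, 0) =
      ∑ α ∈ multiIdxLe m k, monoC α t * pderivC a I k α j s := by
  have hF := hasFDerivAt_slice ha k hs ht
  have hG : HasFDerivAt (fun s' => ∑ α ∈ multiIdxLe m k, monoC α t * coeffC a I k α s')
      (∑ α ∈ multiIdxLe m k, monoC α t •
        (∑ v, (I k).lam α v • ((fderiv ℝ (a k) (s, (I k).node v)).comp (inlE m)) :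
          (Fin m → ℝ) →L[ℝ] ℂ)) s :=
    HasFDerivAt.fun_sum fun α _ => (coeffC_hasFDerivAt ha I k α hs).const_mul _
  have heq : (fun s' => a k (s', t)) =ᶠ[nhds s]
      (fun s' => ∑ α ∈ multiIdxLe m k, monoC α t * coeffC a I k α s') :=
    Filter.eventuallyEq_of_mem (isOpen_ball.mem_nhds hs) fun s' hs' => hexp s' hs' t ht
  have hfd := Filter.EventuallyEq.fderiv_eq (𝕜 := ℝ) heq
  rw [hF.fderiv, hG.fderiv] at hfd
  have happ := DFunLike.congr_fun hfd (Pi.single j 1 : Fin m → ℝ)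
  simpa [pderivC, Finset.mul_sum, smul_eq_mul, mul_assoc] using happ

lemma expansion_succ (ha : ∀ k, ContDiffOn ℝ 1 (a k) (ball 0 ρ))
    (hrec : ∀ (k : ℕ) (j : Fin m), ∀ p ∈ ball (0 : (Fin m → ℝ) × (Fin m → ℝ)) ρ,
      fderiv ℝ (a (k + 1)) p (0, Pi.single j 1) = fderiv ℝ (a k) p (Pi.single j 1, 0))
    (I : ∀ k, Interp m k ρ) (k : ℕ)
    (hexp : ∀ s ∈ ball (0 : Fin m → ℝ) ρ, ∀ t ∈ ball (0 : Fin m → ℝ) ρ,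
      a k (s, t) = ∑ α ∈ multiIdxLe m k, monoC α t * coeffC a I k α s) :
    ∀ s ∈ ball (0 : Fin m → ℝ) ρ, ∀ t ∈ ball (0 : Fin m → ℝ) ρ,
      a (k+1) (s, t) = ∑ α ∈ multiIdxLe m (k+1), monoC α t * coeffC a I (k+1) α s := by
  intro s hs t ht
  have hρ : (0:ℝ) < ρ := pos_of_mem_ball hs
  have h0ball : (0 : Fin m → ℝ) ∈ ball (0 : Fin m → ℝ) ρ := mem_ball_self hρ
  set cc : (Fin m → ℕ) → ℂ := fun β =>
    if β = 0 then a (k+1) (s, 0)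
    else (((∑ l, β l : ℕ) : ℂ))⁻¹ *
      ∑ j ∈ Finset.univ.filter (fun j => 1 ≤ β j),
        pderivC a I k (β - Pi.single j 1) j s
    with hcc
  have key : ∀ t' ∈ ball (0 : Fin m → ℝ) ρ,
      a (k+1) (s, t') = ∑ β ∈ multiIdxLe m (k+1), monoC β t' * cc β := by
    intro t' ht'
    set φ : ℝ → ℂ := fun r => ∑ j, ∑ α ∈ multiIdxLe m k,
      ((r:ℂ) ^ (∑ l, α l)) * (((t' j : ℝ):ℂ) * monoC α t' * pderivC a I k α j s) with hφ
    have hsm : ∀ r : ℝ, r ∈ Set.uIcc (0:ℝ) 1 → r • t' ∈ ball (0 : Fin m → ℝ) ρ := by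
      intro r hr
      rw [Set.uIcc_of_le (by norm_num : (0:ℝ) ≤ 1)] at hr
      rw [mem_ball_zero_iff, norm_smul]
      have h1 : ‖r‖ ≤ 1 := by
        rw [Real.norm_eq_abs]
        exact abs_le.mpr ⟨by linarith [hr.1], hr.2⟩
      have h2 : ‖t'‖ < ρ := mem_ball_zero_iff.mp ht'
      calc ‖r‖ * ‖t'‖ ≤ 1 * ‖t'‖ := mul_le_mul_of_nonneg_right h1 (norm_nonneg _)
        _ = ‖t'‖ := one_mul _
        _ < ρ := h2
    have hderiv : ∀ r ∈ Set.uIcc (0:ℝ) 1,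
        HasDerivAt (fun r => a (k+1) (s, r • t')) (φ r) r := by
      intro r hr
      have hrt := hsm r hr
      have hψ : HasDerivAt (fun r : ℝ => (s, r • t')) ((0 : Fin m → ℝ), t') r := by
        have h1 : HasDerivAt (fun r : ℝ => r • t') t' r := by
          simpa using (hasDerivAt_id r).smul_const t'
        exact (hasDerivAt_const r s).prodMk h1
      have hcomp := ((diffAt ha (k+1) hs hrt).hasFDerivAt).comp_hasDerivAt r hψ
      have hval : fderiv ℝ (a (k+1)) (s, r • t') ((0 : Fin m → ℝ), t') = φ r := by
        have e1 : ((0 : Fin m → ℝ), t') =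
            ∑ j, t' j • ((0:Fin m→ℝ), (Pi.single j 1 : Fin m → ℝ)) := pair_zero_eq_sum t'
        rw [e1, map_sum]
        have e2 : ∀ j : Fin m,
            fderiv ℝ (a (k+1)) (s, r • t')
              (t' j • ((0:Fin m→ℝ), (Pi.single j 1 : Fin m → ℝ)))
            = ((t' j : ℝ) : ℂ) * ∑ α ∈ multiIdxLe m k,
                ((r:ℂ) ^ (∑ l, α l)) * (monoC α t' * pderivC a I k α j s) := by
          intro j
          rw [map_smul, hrec k j (s, r • t') (mem_prodBall.mpr ⟨hs, hrt⟩),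
            pderiv_expansion ha I k hexp hs hrt j, Complex.real_smul]
          congr 1
          apply Finset.sum_congr rfl
          intro α _
          rw [monoC_smul, mul_assoc]
        rw [Finset.sum_congr rfl fun j _ => e2 j, hφ]
        apply Finset.sum_congr rfl
        intro j _
        rw [Finset.mul_sum]
        exact Finset.sum_congr rfl fun α _ => by ring
      rw [← hval]
      exact hcomp
    have hint : IntervalIntegrable φ MeasureTheory.volume 0 1 := by
      apply Continuous.intervalIntegrable
      rw [hφ]
      apply continuous_finset_sum
      intro j _
      apply continuous_finset_sum
      intro α _
      exact ((Complex.continuous_ofReal.comp continuous_id).pow _).mul continuous_const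
    have hFTC := intervalIntegral.integral_eq_sub_of_hasDerivAt hderiv hint
    have hInt : ∫ r in (0:ℝ)..1, φ r = ∑ j, ∑ α ∈ multiIdxLe m k,
        (((∑ l, α l : ℕ) : ℂ) + 1)⁻¹ *
          (((t' j : ℝ):ℂ) * monoC α t' * pderivC a I k α j s) := by
      rw [hφ]
      rw [intervalIntegral.integral_finset_sum]
      · apply Finset.sum_congr rfl
        intro j _
        rw [intervalIntegral.integral_finset_sum]
        · apply Finset.sum_congr rfl
          intro α _
          rw [intervalIntegral.integral_mul_const]
          congr 1
          have e3 : (fun r : ℝ => ((r:ℂ)) ^ (∑ l, α l)) =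
              fun r : ℝ => (((r ^ (∑ l, α l) : ℝ)) : ℂ) := by
            funext r
            push_cast
            rfl
          rw [e3, intervalIntegral.integral_ofReal, integral_pow]
          push_cast
          simp
        · intro α _
          apply Continuous.intervalIntegrable
          exact ((Complex.continuous_ofReal.comp continuous_id).pow _).mul continuous_const
      · intro j _
        apply Continuous.intervalIntegrable
        apply continuous_finset_sum
        intro α _
        exact ((Complex.continuous_ofReal.comp continuous_id).pow _).mul continuous_const
    rw [hInt] at hFTC
    have h1t : (1:ℝ) • t' = t' := one_smul _ _
    have h0t : (0:ℝ) • t' = (0 : Fin m → ℝ) := zero_smul _ _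
    rw [h1t, h0t] at hFTC
    -- now hFTC : double sum = a (k+1) (s,t') - a (k+1) (s,0)
    -- reindex the double sum
    have hre : ∑ j, ∑ α ∈ multiIdxLe m k,
        (((∑ l, α l : ℕ) : ℂ) + 1)⁻¹ *
          (((t' j : ℝ):ℂ) * monoC α t' * pderivC a I k α j s)
        = ∑ β ∈ (multiIdxLe m (k+1)).erase 0, monoC β t' * cc β := by
      have hrhs : ∀ β ∈ (multiIdxLe m (k+1)).erase 0, monoC β t' * cc β
          = ∑ j ∈ Finset.univ.filter (fun j => 1 ≤ β j),
              monoC β t' * (((∑ l, β l : ℕ) : ℂ))⁻¹ * pderivC a I k (β - Pi.single j 1) j s := by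
        intro β hβ
        have hβ0 : β ≠ 0 := (Finset.mem_erase.mp hβ).1
        rw [hcc]
        simp only [if_neg hβ0]
        rw [← mul_assoc, Finset.mul_sum]
      rw [Finset.sum_congr rfl hrhs]
      have e4 : ∑ j : Fin m, ∑ α ∈ multiIdxLe m k,
          (((∑ l, α l : ℕ) : ℂ) + 1)⁻¹ *
            (((t' j : ℝ):ℂ) * monoC α t' * pderivC a I k α j s)
          = ∑ p ∈ (Finset.univ : Finset (Fin m)) ×ˢ multiIdxLe m k,
              (((∑ l, p.2 l : ℕ) : ℂ) + 1)⁻¹ *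
                (((t' p.1 : ℝ):ℂ) * monoC p.2 t' * pderivC a I k p.2 p.1 s) := by
        rw [Finset.sum_product]
      have e5 : ∑ β ∈ (multiIdxLe m (k+1)).erase 0,
          ∑ j ∈ Finset.univ.filter (fun j => 1 ≤ β j),
            monoC β t' * (((∑ l, β l : ℕ) : ℂ))⁻¹ * pderivC a I k (β - Pi.single j 1) j s
          = ∑ q ∈ (((multiIdxLe m (k+1)).erase 0) ×ˢ (Finset.univ : Finset (Fin m))).filter
              (fun q => 1 ≤ q.1 q.2),
              monoC q.1 t' * (((∑ l, q.1 l : ℕ) : ℂ))⁻¹ *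
                pderivC a I k (q.1 - Pi.single q.2 1) q.2 s := by
        rw [Finset.sum_filter, Finset.sum_product]
        apply Finset.sum_congr rfl
        intro β _
        rw [Finset.sum_filter]
      rw [e4, e5]
      apply Finset.sum_nbij' (i := fun p : Fin m × (Fin m → ℕ) => (p.2 + Pi.single p.1 1, p.1))
        (j := fun q : (Fin m → ℕ) × Fin m => (q.2, q.1 - Pi.single q.2 1))
      · rintro ⟨j, α⟩ hp
        dsimp only
        have hα : α ∈ multiIdxLe m k := (Finset.mem_product.mp hp).2
        have hsum : ∑ l, α l ≤ k := mem_multiIdxLe.mp hα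
        refine Finset.mem_filter.mpr ⟨Finset.mem_product.mpr ⟨Finset.mem_erase.mpr ⟨?_, ?_⟩, Finset.mem_univ _⟩, ?_⟩
        · intro h
          have := congrFun h j
          simp at this
        · rw [mem_multiIdxLe, sum_add_single]
          omega
        · simp
      · rintro ⟨β, j⟩ hq
        dsimp only
        have h1 := Finset.mem_filter.mp hq
        have hβ : β ∈ (multiIdxLe m (k+1)).erase 0 := (Finset.mem_product.mp h1.1).1
        have hβ1 : 1 ≤ β j := h1.2
        have hβsum : ∑ l, β l ≤ k + 1 := mem_multiIdxLe.mp (Finset.mem_erase.mp hβ).2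
        refine Finset.mem_product.mpr ⟨Finset.mem_univ _, ?_⟩
        rw [mem_multiIdxLe]
        dsimp only
        have := sum_sub_single_add_one (β := β) (j := j) hβ1
        omega
      · rintro ⟨j, α⟩ hp
        simp only
        rw [add_sub_single]
      · rintro ⟨β, j⟩ hq
        have h1 := Finset.mem_filter.mp hq
        have hβ1 : 1 ≤ β j := h1.2
        simp only
        rw [sub_add_single hβ1]
      · rintro ⟨j, α⟩ hp
        dsimp only
        rw [monoC_add_single, sum_add_single, add_sub_single]
        push_cast
        ring
    rw [hre] at hFTC
    have hz : (0 : Fin m → ℕ) ∈ multiIdxLe m (k+1) := by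
      rw [mem_multiIdxLe]
      simp
    have hsplit : ∑ β ∈ multiIdxLe m (k+1), monoC β t' * cc β
        = monoC 0 t' * cc 0 + ∑ β ∈ (multiIdxLe m (k+1)).erase 0, monoC β t' * cc β :=
      (Finset.add_sum_erase _ _ hz).symm
    rw [hsplit]
    have hcc0 : cc 0 = a (k+1) (s, 0) := by rw [hcc]; simp
    rw [hcc0, monoC_zero, one_mul]
    linear_combination -hFTC
  have hcoeff : ∀ α ∈ multiIdxLe m (k+1), coeffC a I (k+1) α s = cc α := by
    intro α hα
    have h := extract (I := I) (K := k+1) (fun t' => a (k+1) (s, t')) (fun β => cc β) key α hα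
    rw [coeffC, ← h]
  rw [key t ht]
  exact Finset.sum_congr rfl fun α hα => by rw [hcoeff α hα]

lemma expansion (ha : ∀ k, ContDiffOn ℝ 1 (a k) (ball 0 ρ))
    (h0 : ∀ j : Fin m, ∀ p ∈ ball (0 : (Fin m → ℝ) × (Fin m → ℝ)) ρ,
      fderiv ℝ (a 0) p (0, Pi.single j 1) = 0)
    (hrec : ∀ (k : ℕ) (j : Fin m), ∀ p ∈ ball (0 : (Fin m → ℝ) × (Fin m → ℝ)) ρ,
      fderiv ℝ (a (k + 1)) p (0, Pi.single j 1) = fderiv ℝ (a k) p (Pi.single j 1, 0))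
    (I : ∀ k, Interp m k ρ) :
    ∀ k, ∀ s ∈ ball (0 : Fin m → ℝ) ρ, ∀ t ∈ ball (0 : Fin m → ℝ) ρ,
      a k (s, t) = ∑ α ∈ multiIdxLe m k, monoC α t * coeffC a I k α s := by
  intro k
  induction k with
  | zero => exact fun s hs t ht => expansion_zero ha h0 I hs ht
  | succ k ih => exact expansion_succ ha hrec I k ih

/-- the `j`-th coordinate functional, complexified -/
noncomputable def coordC (m : ℕ) (j : Fin m) : (Fin m → ℝ) →L[ℝ] ℂ :=
  Complex.ofRealCLM.comp (ContinuousLinearMap.proj j)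

@[simp] lemma coordC_apply (j : Fin m) (v : Fin m → ℝ) : coordC m j v = ((v j : ℝ) : ℂ) := rfl

lemma hasFDerivAt_monoC (β : Fin m → ℕ) (t : Fin m → ℝ) :
    HasFDerivAt (fun t' => monoC β t')
      (∑ l, (∏ i ∈ Finset.univ.erase l, ((t i : ℝ):ℂ)^(β i)) •
        ((((β l : ℕ) : ℂ) * ((t l : ℝ):ℂ)^(β l - 1)) • coordC m l)) t := by
  have h : ∀ l ∈ (Finset.univ : Finset (Fin m)),
      HasFDerivAt (fun t' : Fin m → ℝ => ((t' l : ℝ):ℂ)^(β l))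
        ((((β l : ℕ) : ℂ) * ((t l : ℝ):ℂ)^(β l - 1)) • coordC m l) t := by
    intro l _
    have h1 : HasDerivAt (fun z : ℂ => z ^ (β l))
        (((β l : ℕ) : ℂ) * ((t l : ℝ):ℂ)^(β l - 1)) (((t l : ℝ):ℂ)) := hasDerivAt_pow _ _
    have h2 : HasFDerivAt (fun t' : Fin m → ℝ => ((t' l : ℝ):ℂ)) (coordC m l) t :=
      (coordC m l).hasFDerivAt
    exact h1.comp_hasFDerivAt t h2
  exact HasFDerivAt.finset_prod h

lemma single_apply_pair (j l : Fin m) :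
    (((Pi.single j 1 : Fin m → ℝ) l : ℝ) : ℂ) = if l = j then 1 else 0 := by
  rcases eq_or_ne l j with rfl | hne
  · simp
  · simp [Pi.single_apply, hne]

lemma monoC_deriv_apply (β : Fin m → ℕ) (t : Fin m → ℝ) (j : Fin m) :
    (∑ l, (∏ i ∈ Finset.univ.erase l, ((t i : ℝ):ℂ)^(β i)) •
        ((((β l : ℕ) : ℂ) * ((t l : ℝ):ℂ)^(β l - 1)) • coordC m l))
      (Pi.single j 1 : Fin m → ℝ)
      = ((β j : ℕ) : ℂ) * monoC (β - Pi.single j 1) t := by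
  rw [ContinuousLinearMap.sum_apply]
  have e1 : ∀ l : Fin m, ((∏ i ∈ Finset.univ.erase l, ((t i : ℝ):ℂ)^(β i)) •
      ((((β l : ℕ) : ℂ) * ((t l : ℝ):ℂ)^(β l - 1)) • coordC m l)) (Pi.single j 1 : Fin m → ℝ)
      = if l = j then (∏ i ∈ Finset.univ.erase l, ((t i : ℝ):ℂ)^(β i)) *
          (((β l : ℕ) : ℂ) * ((t l : ℝ):ℂ)^(β l - 1)) else 0 := by
    intro l
    rw [ContinuousLinearMap.smul_apply, ContinuousLinearMap.smul_apply, coordC_apply,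
      single_apply_pair]
    rcases eq_or_ne l j with rfl | hne
    · simp
    · simp [hne]
  rw [Finset.sum_congr rfl fun l _ => e1 l, Finset.sum_ite_eq' Finset.univ j]
  simp only [Finset.mem_univ, if_pos]
  rcases Nat.eq_zero_or_pos (β j) with h0 | hpos
  · simp [h0]
  · have hsub : ∀ i ∈ Finset.univ.erase j, ((t i : ℝ):ℂ)^((β - (Pi.single j 1 : Fin m → ℕ)) i)
        = ((t i : ℝ):ℂ)^(β i) := by
      intro i hi
      have hne : i ≠ j := Finset.ne_of_mem_erase hi
      congr 1
      simp [Pi.single_apply, hne]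
    rw [monoC, ← Finset.mul_prod_erase _ _ (Finset.mem_univ j),
      Finset.prod_congr rfl hsub]
    have hjj : (β - (Pi.single j 1 : Fin m → ℕ)) j = β j - 1 := by simp
    rw [hjj]
    ring

lemma pderivC_eq (ha : ∀ k, ContDiffOn ℝ 1 (a k) (ball 0 ρ))
    (hrec : ∀ (k : ℕ) (j : Fin m), ∀ p ∈ ball (0 : (Fin m → ℝ) × (Fin m → ℝ)) ρ,
      fderiv ℝ (a (k + 1)) p (0, Pi.single j 1) = fderiv ℝ (a k) p (Pi.single j 1, 0))
    (I : ∀ k, Interp m k ρ)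
    (hexpAll : ∀ k, ∀ s ∈ ball (0 : Fin m → ℝ) ρ, ∀ t ∈ ball (0 : Fin m → ℝ) ρ,
      a k (s, t) = ∑ α ∈ multiIdxLe m k, monoC α t * coeffC a I k α s)
    (k : ℕ) (j : Fin m) {s : Fin m → ℝ} (hs : s ∈ ball (0 : Fin m → ℝ) ρ) :
    ∀ α ∈ multiIdxLe m k, pderivC a I k α j s =
      (((α j + 1 : ℕ)) : ℂ) * coeffC a I (k+1) (α + Pi.single j 1) s := by
  apply coeff_eq_of_expansion_eq I
  intro t ht
  have hL : ∑ α ∈ multiIdxLe m k, monoC α t * pderivC a I k α j s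
      = fderiv ℝ (a k) (s, t) (Pi.single j 1, 0) :=
    (pderiv_expansion ha I k (hexpAll k) hs ht j).symm
  rw [hL, ← hrec k j (s, t) (mem_prodBall.mpr ⟨hs, ht⟩)]
  -- compute the t-derivative of the level-(k+1) expansion
  have hF := hasFDerivAt_sliceT ha (k+1) hs ht
  have hG : HasFDerivAt
      (fun t' => ∑ β ∈ multiIdxLe m (k+1), monoC β t' * coeffC a I (k+1) β s)
      (∑ β ∈ multiIdxLe m (k+1), coeffC a I (k+1) β s •
        (∑ l, (∏ i ∈ Finset.univ.erase l, ((t i : ℝ):ℂ)^(β i)) •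
          ((((β l : ℕ) : ℂ) * ((t l : ℝ):ℂ)^(β l - 1)) • coordC m l))) t :=
    HasFDerivAt.fun_sum fun β _ => (hasFDerivAt_monoC β t).mul_const _
  have heq : (fun t' => a (k+1) (s, t')) =ᶠ[nhds t]
      (fun t' => ∑ β ∈ multiIdxLe m (k+1), monoC β t' * coeffC a I (k+1) β s) :=
    Filter.eventuallyEq_of_mem (isOpen_ball.mem_nhds ht)
      fun t' ht' => hexpAll (k+1) s hs t' ht'
  have hfd := Filter.EventuallyEq.fderiv_eq (𝕜 := ℝ) heq
  rw [hF.fderiv, hG.fderiv] at hfd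
  have hval : fderiv ℝ (a (k+1)) (s, t) ((0 : Fin m → ℝ), (Pi.single j 1 : Fin m → ℝ))
      = ∑ β ∈ multiIdxLe m (k+1),
          ((β j : ℕ) : ℂ) * monoC (β - Pi.single j 1) t * coeffC a I (k+1) β s := by
    have h1 : fderiv ℝ (a (k+1)) (s, t) ((0 : Fin m → ℝ), (Pi.single j 1 : Fin m → ℝ))
        = ((fderiv ℝ (a (k+1)) (s, t)).comp (inrE m)) (Pi.single j 1 : Fin m → ℝ) := by
      simp
    rw [h1, hfd, ContinuousLinearMap.sum_apply]
    apply Finset.sum_congr rfl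
    intro β hβ
    rw [ContinuousLinearMap.smul_apply, monoC_deriv_apply, smul_eq_mul]
    ring
  rw [hval]
  have e3 : ∑ β ∈ multiIdxLe m (k+1),
      ((β j : ℕ) : ℂ) * monoC (β - Pi.single j 1) t * coeffC a I (k+1) β s
      = ∑ β ∈ (multiIdxLe m (k+1)).filter (fun β => 1 ≤ β j),
      ((β j : ℕ) : ℂ) * monoC (β - Pi.single j 1) t * coeffC a I (k+1) β s := by
    symm
    apply Finset.sum_filter_of_ne
    intro β _ hne
    by_contra hc
    push_neg at hc
    have : β j = 0 := by omega
    simp [this] at hne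
  rw [e3]
  apply Finset.sum_nbij' (i := fun β => β - Pi.single j 1) (j := fun α => α + Pi.single j 1)
  · intro β hβ
    have h1 := Finset.mem_filter.mp hβ
    have hβ1 : 1 ≤ β j := h1.2
    have hβsum : ∑ l, β l ≤ k + 1 := mem_multiIdxLe.mp h1.1
    rw [mem_multiIdxLe]
    have := sum_sub_single_add_one (β := β) (j := j) hβ1
    omega
  · intro α hα
    have hαsum : ∑ l, α l ≤ k := mem_multiIdxLe.mp hα
    refine Finset.mem_filter.mpr ⟨?_, ?_⟩
    · rw [mem_multiIdxLe, sum_add_single]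
      omega
    · simp
  · intro β hβ
    exact sub_add_single (Finset.mem_filter.mp hβ).2
  · intro α hα
    exact add_sub_single α j
  · intro β hβ
    have hβ1 : 1 ≤ β j := (Finset.mem_filter.mp hβ).2
    have h2 : (β - (Pi.single j 1 : Fin m → ℕ)) j = β j - 1 := by simp
    rw [sub_add_single hβ1, h2]
    have h3 : ((β j - 1 + 1 : ℕ) : ℂ) = ((β j : ℕ) : ℂ) := by
      rw [Nat.sub_add_cancel hβ1]
    rw [h3]
    ring

lemma fderiv_coeffC_eq (ha : ∀ k, ContDiffOn ℝ 1 (a k) (ball 0 ρ))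
    (hrec : ∀ (k : ℕ) (j : Fin m), ∀ p ∈ ball (0 : (Fin m → ℝ) × (Fin m → ℝ)) ρ,
      fderiv ℝ (a (k + 1)) p (0, Pi.single j 1) = fderiv ℝ (a k) p (Pi.single j 1, 0))
    (I : ∀ k, Interp m k ρ)
    (hexpAll : ∀ k, ∀ s ∈ ball (0 : Fin m → ℝ) ρ, ∀ t ∈ ball (0 : Fin m → ℝ) ρ,
      a k (s, t) = ∑ α ∈ multiIdxLe m k, monoC α t * coeffC a I k α s)
    (k : ℕ) (α : Fin m → ℕ) (hα : α ∈ multiIdxLe m k) {s : Fin m → ℝ}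
    (hs : s ∈ ball (0 : Fin m → ℝ) ρ) :
    fderiv ℝ (coeffC a I k α) s =
      ∑ j, ((((α j + 1 : ℕ)) : ℂ) * coeffC a I (k+1) (α + Pi.single j 1) s) • coordC m j := by
  apply ContinuousLinearMap.ext
  intro v
  have e1 : fderiv ℝ (coeffC a I k α) s v
      = ∑ j, v j • fderiv ℝ (coeffC a I k α) s (Pi.single j 1 : Fin m → ℝ) := by
    conv_lhs => rw [show v = ∑ j, v j • (Pi.single j 1 : Fin m → ℝ) from (single_smul_sum v).symm]
    rw [map_sum]
    exact Finset.sum_congr rfl fun j _ => by rw [map_smul]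
  rw [e1, ContinuousLinearMap.sum_apply]
  apply Finset.sum_congr rfl
  intro j _
  rw [coeffC_fderiv_apply ha I k α hs j, pderivC_eq ha hrec I hexpAll k j hs α hα,
    ContinuousLinearMap.smul_apply, coordC_apply, smul_eq_mul, Complex.real_smul]
  ring

lemma coeffC_contDiffOn (ha : ∀ k, ContDiffOn ℝ 1 (a k) (ball 0 ρ))
    (hrec : ∀ (k : ℕ) (j : Fin m), ∀ p ∈ ball (0 : (Fin m → ℝ) × (Fin m → ℝ)) ρ,
      fderiv ℝ (a (k + 1)) p (0, Pi.single j 1) = fderiv ℝ (a k) p (Pi.single j 1, 0))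
    (I : ∀ k, Interp m k ρ)
    (hexpAll : ∀ k, ∀ s ∈ ball (0 : Fin m → ℝ) ρ, ∀ t ∈ ball (0 : Fin m → ℝ) ρ,
      a k (s, t) = ∑ α ∈ multiIdxLe m k, monoC α t * coeffC a I k α s) :
    ∀ n : ℕ, ∀ k, ∀ α ∈ multiIdxLe m k, ContDiffOn ℝ n (coeffC a I k α) (ball 0 ρ) := by
  intro n
  induction n with
  | zero =>
    intro k α hα
    rw [show (((0:ℕ)) : WithTop ℕ∞) = 0 from rfl, contDiffOn_zero]
    exact fun s hs =>
      ((coeffC_hasFDerivAt ha I k α hs).differentiableAt).continuousAt.continuousWithinAt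
  | succ n ih =>
    intro k α hα
    have hcast : (((n+1:ℕ)) : WithTop ℕ∞) = ((n : ℕ) : WithTop ℕ∞) + 1 := by push_cast; rfl
    rw [hcast, contDiffOn_succ_iff_fderiv_of_isOpen isOpen_ball]
    refine ⟨fun s hs => ((coeffC_hasFDerivAt ha I k α hs).differentiableAt).differentiableWithinAt,
      ?_, ?_⟩
    · intro h
      exact absurd h (by exact_mod_cast (WithTop.natCast_ne_top n))
    · apply ContDiffOn.congr
        (f := fun s => ∑ j, ((((α j + 1 : ℕ)) : ℂ) * coeffC a I (k+1) (α + Pi.single j 1) s) •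
          coordC m j)
      · apply ContDiffOn.sum
        intro j _
        have hL : ContDiff ℝ n (fun z : ℂ => z • coordC m j) :=
          ((ContinuousLinearMap.toSpanSingleton ℂ (coordC m j)).restrictScalars ℝ).contDiff
        have hmem : α + Pi.single j 1 ∈ multiIdxLe m (k+1) := by
          rw [mem_multiIdxLe, sum_add_single]
          have := mem_multiIdxLe.mp hα
          omega
        have hc : ContDiffOn ℝ n
            (fun s => (((α j + 1 : ℕ)) : ℂ) * coeffC a I (k+1) (α + Pi.single j 1) s)
            (ball 0 ρ) := contDiffOn_const.mul (ih (k+1) (α + Pi.single j 1) hmem)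
        exact hL.comp_contDiffOn hc
      · intro s hs
        exact fderiv_coeffC_eq ha hrec I hexpAll k α hα hs

lemma pderivS_congr {f g : (Fin m → ℝ) → ℂ} (h : ∀ x ∈ ball (0 : Fin m → ℝ) ρ, f x = g x)
    (j : Fin m) {s : Fin m → ℝ} (hs : s ∈ ball (0 : Fin m → ℝ) ρ) :
    partialDerivS m j f s = partialDerivS m j g s := by
  rw [partialDerivS, partialDerivS]
  congr 1
  exact Filter.EventuallyEq.fderiv_eq (𝕜 := ℝ)
    (Filter.eventuallyEq_of_mem (isOpen_ball.mem_nhds hs) h)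

lemma iter_congr {f g : (Fin m → ℝ) → ℂ} (j : Fin m) (n : ℕ)
    (h : ∀ x ∈ ball (0 : Fin m → ℝ) ρ, f x = g x) :
    ∀ s ∈ ball (0 : Fin m → ℝ) ρ,
      (partialDerivS m j)^[n] f s = (partialDerivS m j)^[n] g s := by
  induction n with
  | zero => exact h
  | succ n ih =>
    intro s hs
    rw [Function.iterate_succ_apply', Function.iterate_succ_apply']
    exact pderivS_congr (fun x hx => ih x hx) j hs

lemma pderivS_coeffC (ha : ∀ k, ContDiffOn ℝ 1 (a k) (ball 0 ρ))
    (hrec : ∀ (k : ℕ) (j : Fin m), ∀ p ∈ ball (0 : (Fin m → ℝ) × (Fin m → ℝ)) ρ,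
      fderiv ℝ (a (k + 1)) p (0, Pi.single j 1) = fderiv ℝ (a k) p (Pi.single j 1, 0))
    (I : ∀ k, Interp m k ρ)
    (hexpAll : ∀ k, ∀ s ∈ ball (0 : Fin m → ℝ) ρ, ∀ t ∈ ball (0 : Fin m → ℝ) ρ,
      a k (s, t) = ∑ α ∈ multiIdxLe m k, monoC α t * coeffC a I k α s)
    (k : ℕ) (j : Fin m) {α : Fin m → ℕ} (hα : α ∈ multiIdxLe m k) {s : Fin m → ℝ}
    (hs : s ∈ ball (0 : Fin m → ℝ) ρ) :
    partialDerivS m j (coeffC a I k α) s =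
      (((α j + 1 : ℕ)) : ℂ) * coeffC a I (k+1) (α + Pi.single j 1) s := by
  rw [partialDerivS, coeffC_fderiv_apply ha I k α hs j]
  exact pderivC_eq ha hrec I hexpAll k j hs α hα

lemma pderivS_const_mul {g : (Fin m → ℝ) → ℂ} {s : Fin m → ℝ}
    (hg : DifferentiableAt ℝ g s) (C : ℂ) (j : Fin m) :
    partialDerivS m j (fun x => C * g x) s = C * partialDerivS m j g s := by
  rw [partialDerivS, partialDerivS, fderiv_const_mul hg]
  simp

lemma pderivS_iter (ha : ∀ k, ContDiffOn ℝ 1 (a k) (ball 0 ρ))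
    (hrec : ∀ (k : ℕ) (j : Fin m), ∀ p ∈ ball (0 : (Fin m → ℝ) × (Fin m → ℝ)) ρ,
      fderiv ℝ (a (k + 1)) p (0, Pi.single j 1) = fderiv ℝ (a k) p (Pi.single j 1, 0))
    (I : ∀ k, Interp m k ρ)
    (hexpAll : ∀ k, ∀ s ∈ ball (0 : Fin m → ℝ) ρ, ∀ t ∈ ball (0 : Fin m → ℝ) ρ,
      a k (s, t) = ∑ α ∈ multiIdxLe m k, monoC α t * coeffC a I k α s)
    (j : Fin m) (n : ℕ) :
    ∀ (k : ℕ) (α : Fin m → ℕ), α ∈ multiIdxLe m k → ∀ (C : ℂ),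
    ∀ s ∈ ball (0 : Fin m → ℝ) ρ,
      (partialDerivS m j)^[n] (fun x => C * coeffC a I k α x) s
        = (C * ∏ i ∈ Finset.range n, (((α j + 1 + i : ℕ)) : ℂ))
            * coeffC a I (k + n) (α + Pi.single j n) s := by
  induction n with
  | zero =>
    intro k α hα C s hs
    simp
  | succ n ih =>
    intro k α hα C s hs
    rw [Function.iterate_succ_apply']
    have hmem : α + Pi.single j n ∈ multiIdxLe m (k + n) := by
      rw [mem_multiIdxLe]
      have h1 : ∑ l, (α + (Pi.single j n : Fin m → ℕ)) l = (∑ l, α l) + n := by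
        simp only [Pi.add_apply]
        rw [Finset.sum_add_distrib, sum_single_nat]
      rw [h1]
      have := mem_multiIdxLe.mp hα
      omega
    have hdiffc : ∀ x ∈ ball (0 : Fin m → ℝ) ρ,
        DifferentiableAt ℝ (coeffC a I (k + n) (α + Pi.single j n)) x :=
      fun x hx => (coeffC_hasFDerivAt ha I _ _ hx).differentiableAt
    have step1 : partialDerivS m j ((partialDerivS m j)^[n]
          (fun x => C * coeffC a I k α x)) s
        = partialDerivS m j (fun x => (C * ∏ i ∈ Finset.range n, (((α j + 1 + i : ℕ)) : ℂ))
            * coeffC a I (k + n) (α + Pi.single j n) x) s :=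
      pderivS_congr (fun x hx => ih k α hα C x hx) j hs
    rw [step1, pderivS_const_mul (hdiffc s hs) _ j,
      pderivS_coeffC ha hrec I hexpAll (k+n) j hmem hs]
    have hj : (α + (Pi.single j n : Fin m → ℕ)) j = α j + n := by simp
    have hsingle : α + (Pi.single j n : Fin m → ℕ) + Pi.single j 1
        = α + Pi.single j (n + 1) := by
      rw [add_assoc, ← Pi.single_add]
    rw [hj, hsingle, Finset.prod_range_succ]
    have hcast : ((α j + n + 1 : ℕ) : ℂ) = ((α j + 1 + n : ℕ) : ℂ) := by
      congr 1
      omega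
    rw [hcast, show k + n + 1 = k + (n + 1) from rfl]
    ring

lemma foldr_coeffC (ha : ∀ k, ContDiffOn ℝ 1 (a k) (ball 0 ρ))
    (hrec : ∀ (k : ℕ) (j : Fin m), ∀ p ∈ ball (0 : (Fin m → ℝ) × (Fin m → ℝ)) ρ,
      fderiv ℝ (a (k + 1)) p (0, Pi.single j 1) = fderiv ℝ (a k) p (Pi.single j 1, 0))
    (I : ∀ k, Interp m k ρ)
    (hexpAll : ∀ k, ∀ s ∈ ball (0 : Fin m → ℝ) ρ, ∀ t ∈ ball (0 : Fin m → ℝ) ρ,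
      a k (s, t) = ∑ α ∈ multiIdxLe m k, monoC α t * coeffC a I k α s)
    (γ : Fin m → ℕ) :
    ∀ (l : List (Fin m)), l.Nodup → ∀ (k : ℕ) (α : Fin m → ℕ), α ∈ multiIdxLe m k →
    ∀ s ∈ ball (0 : Fin m → ℝ) ρ,
      (l.foldr (fun j h => (partialDerivS m j)^[γ j] h) (coeffC a I k α)) s
        = (∏ j ∈ l.toFinset, ∏ i ∈ Finset.range (γ j), (((α j + 1 + i : ℕ)) : ℂ))
            * coeffC a I (k + ∑ j ∈ l.toFinset, γ j)
                (α + ∑ j ∈ l.toFinset, Pi.single j (γ j)) s := by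
  intro l
  induction l with
  | nil =>
    intro _ k α hα s hs
    simp
  | cons j l' ih =>
    intro hnodup k α hα s hs
    have hj : j ∉ l' := (List.nodup_cons.mp hnodup).1
    have hnd : l'.Nodup := (List.nodup_cons.mp hnodup).2
    have hjF : j ∉ l'.toFinset := fun hc => hj (List.mem_toFinset.mp hc)
    set T := l'.toFinset with hT
    set α' := α + ∑ j' ∈ T, Pi.single j' (γ j') with hα'
    set k' := k + ∑ j' ∈ T, γ j' with hk'
    have hsumα' : ∑ l'', α' l'' = (∑ l'', α l'') + ∑ j' ∈ T, γ j' := by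
      rw [hα']
      simp only [Pi.add_apply]
      rw [Finset.sum_add_distrib]
      congr 1
      rw [Finset.sum_congr rfl (fun l'' _ => Finset.sum_apply l'' T _), Finset.sum_comm]
      exact Finset.sum_congr rfl fun j' _ => sum_single_nat j' (γ j')
    have hmem' : α' ∈ multiIdxLe m k' := by
      rw [mem_multiIdxLe, hsumα', hk']
      have := mem_multiIdxLe.mp hα
      omega
    have step1 : (List.foldr (fun j h => (partialDerivS m j)^[γ j] h)
          (coeffC a I k α) (j :: l')) s
        = (partialDerivS m j)^[γ j]
            (fun x => (∏ j' ∈ T, ∏ i ∈ Finset.range (γ j'), (((α j' + 1 + i : ℕ)) : ℂ))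
              * coeffC a I k' α' x) s := by
      rw [List.foldr_cons]
      exact iter_congr j (γ j) (fun x hx => ih hnd k α hα x hx) s hs
    rw [step1, pderivS_iter ha hrec I hexpAll j (γ j) k' α' hmem' _ s hs]
    have hα'j : α' j = α j := by
      rw [hα']
      simp only [Pi.add_apply]
      have : (∑ j' ∈ T, Pi.single j' (γ j') : Fin m → ℕ) j = 0 := by
        rw [Finset.sum_apply]
        apply Finset.sum_eq_zero
        intro j' hj'
        have : j' ≠ j := fun hc => hjF (hc ▸ hj')
        simp [Pi.single_apply, this]
      rw [this, add_zero]
    have hins : (j :: l').toFinset = insert j T := by rw [List.toFinset_cons]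
    rw [hα'j, hins, Finset.prod_insert hjF, Finset.sum_insert hjF, Finset.sum_insert hjF]
    have hidx : k' + γ j = k + (γ j + ∑ j'' ∈ T, γ j'') := by rw [hk']; omega
    have hargeq : α' + Pi.single j (γ j)
        = α + (Pi.single j (γ j) + ∑ j'' ∈ T, Pi.single j'' (γ j'')) := by
      rw [hα']
      abel
    rw [hidx, hargeq]
    ring

lemma multiDeriv_coeffC (ha : ∀ k, ContDiffOn ℝ 1 (a k) (ball 0 ρ))
    (hrec : ∀ (k : ℕ) (j : Fin m), ∀ p ∈ ball (0 : (Fin m → ℝ) × (Fin m → ℝ)) ρ,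
      fderiv ℝ (a (k + 1)) p (0, Pi.single j 1) = fderiv ℝ (a k) p (Pi.single j 1, 0))
    (I : ∀ k, Interp m k ρ)
    (hexpAll : ∀ k, ∀ s ∈ ball (0 : Fin m → ℝ) ρ, ∀ t ∈ ball (0 : Fin m → ℝ) ρ,
      a k (s, t) = ∑ α ∈ multiIdxLe m k, monoC α t * coeffC a I k α s)
    (γ : Fin m → ℕ) (i : ℕ) {s : Fin m → ℝ} (hs : s ∈ ball (0 : Fin m → ℝ) ρ) :
    multiDeriv m γ (coeffC a I i 0) s =
      ((∏ j, (γ j).factorial : ℕ) : ℂ) * coeffC a I (i + ∑ j, γ j) γ s := by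
  have h0mem : (0 : Fin m → ℕ) ∈ multiIdxLe m i := mem_multiIdxLe.mpr (by simp)
  have hmain := foldr_coeffC ha hrec I hexpAll γ (List.finRange m) (List.nodup_finRange m)
    i 0 h0mem s hs
  rw [List.toFinset_finRange] at hmain
  rw [multiDeriv, hmain]
  have hconst : (∏ j, ∏ i' ∈ Finset.range (γ j), ((((0 : Fin m → ℕ) j + 1 + i' : ℕ)) : ℂ))
      = ((∏ j, (γ j).factorial : ℕ) : ℂ) := by
    rw [Nat.cast_prod]
    apply Finset.prod_congr rfl
    intro j _
    have e : ∀ i' ∈ Finset.range (γ j), ((((0 : Fin m → ℕ) j + 1 + i' : ℕ)) : ℂ)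
        = ((i' + 1 : ℕ) : ℂ) := by
      intro i' _
      norm_num
      rw [add_comm]
    rw [Finset.prod_congr rfl e, ← Nat.cast_prod, Finset.prod_range_add_one_eq_factorial]
  have harg : (0 : Fin m → ℕ) + ∑ j, Pi.single j (γ j) = γ := by
    rw [zero_add, Finset.univ_sum_single]
  have hsum0 : ∀ j : Fin m, (0 : Fin m → ℕ) j = 0 := fun _ => rfl
  rw [hconst, harg]

end Main

end EG

/-- Formula (2.3) of Eastwood–Graham with smoothness bootstrap: if `C^1`
functions `aₖ` on a ball `B` about the origin of `ℝ^m × ℝ^m` satisfy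
`∂a₀/∂tⱼ = 0` and `∂aₖ/∂tⱼ = ∂aₖ₋₁/∂sⱼ` for `k ≥ 1`, then there are `C^∞`
functions `bₖ` on a ball `B'` about the origin of `ℝ^m` with
`aₖ(s,t) = ∑_{|α| ≤ k} (1/α!) t^α ∂_s^α b_{k-|α|}(s)`; in particular each `aₖ`
is a polynomial in `t` of degree at most `k`. -/
theorem coefficients_polynomial_in_t (m : ℕ) (hm : 1 ≤ m) (ρ : ℝ) (hρ : 0 < ρ)
    (a : ℕ → (Fin m → ℝ) × (Fin m → ℝ) → ℂ)
    (ha : ∀ k, ContDiffOn ℝ 1 (a k) (Metric.ball 0 ρ))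
    (h0 : ∀ j : Fin m, ∀ p ∈ Metric.ball (0 : (Fin m → ℝ) × (Fin m → ℝ)) ρ,
      fderiv ℝ (a 0) p (0, Pi.single j 1) = 0)
    (hrec : ∀ (k : ℕ) (j : Fin m),
      ∀ p ∈ Metric.ball (0 : (Fin m → ℝ) × (Fin m → ℝ)) ρ,
        fderiv ℝ (a (k + 1)) p (0, Pi.single j 1) =
          fderiv ℝ (a k) p (Pi.single j 1, 0)) :
    ∃ ρ' : ℝ, 0 < ρ' ∧
      ∃ b : ℕ → (Fin m → ℝ) → ℂ,
        (∀ k, ContDiffOn ℝ (⊤ : ℕ∞) (b k) (Metric.ball 0 ρ')) ∧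
        ∀ (k : ℕ) (s t : Fin m → ℝ),
          (s, t) ∈ Metric.ball (0 : (Fin m → ℝ) × (Fin m → ℝ)) ρ →
          s ∈ Metric.ball (0 : Fin m → ℝ) ρ' → t ∈ Metric.ball (0 : Fin m → ℝ) ρ' →
          a k (s, t) = ∑ α ∈ multiIdxLe m k,
            (((∏ j, (α j).factorial : ℕ) : ℂ))⁻¹ *
              (((∏ j, (t j) ^ (α j) : ℝ) : ℂ)) *
              multiDeriv m α (b (k - ∑ j, α j)) s := by
  have hI : ∀ k, Nonempty (EG.Interp m k ρ) := fun k => EG.interp_exists k hρ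
  have I : ∀ k, EG.Interp m k ρ := fun k => (hI k).some
  have hexpAll := EG.expansion ha h0 hrec I
  refine ⟨ρ, hρ, fun i => EG.coeffC a I i 0, ?_, ?_⟩
  · intro k
    rw [contDiffOn_infty]
    intro n
    exact EG.coeffC_contDiffOn ha hrec I hexpAll n k 0 (EG.mem_multiIdxLe.mpr (by simp))
  · intro k s t hst hs ht
    rw [hexpAll k s hs t ht]
    apply Finset.sum_congr rfl
    intro α hα
    have hsum : ∑ j, α j ≤ k := EG.mem_multiIdxLe.mp hα
    rw [EG.multiDeriv_coeffC ha hrec I hexpAll α (k - ∑ j, α j) hs,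
      show (k - ∑ j, α j) + ∑ j, α j = k from by omega]
    have hfact : ((∏ j, (α j).factorial : ℕ) : ℂ) ≠ 0 := by
      rw [Nat.cast_ne_zero]
      exact Finset.prod_ne_zero_iff.mpr fun j _ => Nat.factorial_ne_zero _
    have hmono : ((∏ j, (t j) ^ (α j) : ℝ) : ℂ) = EG.monoC α t := by
      rw [EG.monoC]
      push_cast
      rfl
    rw [hmono]
    have hF : (∏ i : Fin m, (((α i).factorial : ℕ) : ℂ)) ≠ 0 :=
      Finset.prod_ne_zero_iff.mpr fun i _ => Nat.cast_ne_zero.mpr (Nat.factorial_ne_zero _)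
    field_simp
end
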